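/- arXiv:2206.09558 — 3 statements merged into one kernel-verified Lean document; each statement's English description precedes it below -/
import Mathlib

section
/- Let H be a connected k-uniform hypergraph with maximum degree Δ. Then the largest real root λ(H) of the matching polynomial μ(H,x) satisfies λ(H) ≥ Δ^{1/k}, with equality if and only if all edges of H share a common vertex. -/
open scoped Classical

structure FinHypergraph (α : Type*) [DecidableEq α] where
  verts : Finset α
  edges : Finset (Finset α)
  edge_sub : ∀ e ∈ edges, e ⊆ verts

namespace FinHypergraph

variable {α : Type*} [DecidableEq α] {β : Type*} [DecidableEq β]

/-- `H` is `k`-uniform: every edge has exactly `k` vertices. -/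
def IsUniform (H : FinHypergraph α) (k : ℕ) : Prop := ∀ e ∈ H.edges, e.card = k

/-- The degree of a vertex: the number of edges containing it. -/
def degree (H : FinHypergraph α) (v : α) : ℕ := (H.edges.filter (fun e => v ∈ e)).card

/-- `Δ` is the maximum degree of `H`. -/
def maxDegree (H : FinHypergraph α) (Δ : ℕ) : Prop :=
  (∀ v, H.degree v ≤ Δ) ∧ ∃ v ∈ H.verts, H.degree v = Δ

/-- Two vertices are adjacent if some edge contains both. -/
def Adj (H : FinHypergraph α) (a b : α) : Prop := ∃ e ∈ H.edges, a ∈ e ∧ b ∈ e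

/-- `H` is connected: nonempty and any two vertices joined by a walk. -/
def Connected (H : FinHypergraph α) : Prop :=
  H.verts.Nonempty ∧ ∀ a ∈ H.verts, ∀ b ∈ H.verts, Relation.ReflTransGen H.Adj a b

/-- A matching: a set of pairwise disjoint edges of `H`. -/
def IsMatching (H : FinHypergraph α) (M : Finset (Finset α)) : Prop :=
  M ⊆ H.edges ∧ ∀ e ∈ M, ∀ f ∈ M, e ≠ f → Disjoint e f

/-- `p(H, r)`: the number of matchings of size `r`. -/
noncomputable def matchCount (H : FinHypergraph α) (r : ℕ) : ℕ :=
  (H.edges.powerset.filter (fun M => M.card = r ∧ H.IsMatching M)).card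

/-- The matching polynomial `μ(H,x) = Σ_r (-1)^r p(H,r) x^{|V| - k r}`. -/
noncomputable def matchingPoly (H : FinHypergraph α) (k : ℕ) : Polynomial ℝ :=
  ∑ r ∈ Finset.range (H.edges.card + 1),
    Polynomial.C ((-1 : ℝ) ^ r * (H.matchCount r : ℝ)) * Polynomial.X ^ (H.verts.card - k * r)

/-- Deleting a set of vertices: induced sub-hypergraph on `verts \ W`. -/
def delete (H : FinHypergraph α) (W : Finset α) : FinHypergraph α where
  verts := H.verts \ W
  edges := H.edges.filter (fun e => Disjoint e W)
  edge_sub := by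
    intro e he
    simp only [Finset.mem_filter] at he
    exact Finset.subset_sdiff.mpr ⟨H.edge_sub e he.1, he.2⟩

/-- The set of moduli of the complex zeros of a real polynomial. -/
def rootModuli (p : Polynomial ℝ) : Set ℝ :=
  {m | ∃ z : ℂ, (Polynomial.aeval z) p = 0 ∧ ‖z‖ = m}

/-- `λ(H)`: the maximum modulus of the complex zeros of the matching polynomial. -/
noncomputable def lam (H : FinHypergraph α) (k : ℕ) : ℝ :=
  sSup (rootModuli (H.matchingPoly k))

end FinHypergraph

set_option linter.unusedSectionVars false

namespace MP

variable {α : Type*} [DecidableEq α]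

def disjFam (M : Finset (Finset α)) : Prop := ∀ e ∈ M, ∀ f ∈ M, e ≠ f → Disjoint e f

noncomputable def mtch (E : Finset (Finset α)) : Finset (Finset (Finset α)) :=
  E.powerset.filter (fun M => disjFam M)

noncomputable def fval (E : Finset (Finset α)) (y : ℝ) : ℝ :=
  ∑ M ∈ mtch E, (-1 : ℝ) ^ M.card * y ^ M.card

lemma mem_mtch {E M : Finset (Finset α)} : M ∈ mtch E ↔ M ⊆ E ∧ disjFam M := by
  simp [mtch, Finset.mem_filter, Finset.mem_powerset]

lemma empty_mem_mtch (E : Finset (Finset α)) : ∅ ∈ mtch E :=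
  mem_mtch.mpr ⟨Finset.empty_subset _, by intro e he; simp at he⟩

lemma fval_at_zero (E : Finset (Finset α)) : fval E 0 = 1 := by
  unfold fval
  rw [Finset.sum_eq_single (∅ : Finset (Finset α))]
  · simp
  · intro M _ hM
    have : M.card ≠ 0 := fun h => hM (Finset.card_eq_zero.mp h)
    rw [zero_pow this, mul_zero]
  · intro h; exact absurd (empty_mem_mtch E) h

lemma continuous_fval (E : Finset (Finset α)) : Continuous (fval E) := by
  unfold fval
  exact continuous_finset_sum _ fun M _ => (continuous_const.mul (continuous_pow _))

lemma fval_rec {E : Finset (Finset α)} {g : Finset α} (hg : g ∈ E) (hne : g.Nonempty)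
    (y : ℝ) :
    fval E y = fval (E.erase g) y - y * fval (E.filter fun e => Disjoint e g) y := by
  classical
  have hgg : ¬ Disjoint g g := fun h => hne.ne_empty (by simpa using disjoint_self.mp h)
  have h1 : (mtch E).filter (fun M => g ∉ M) = mtch (E.erase g) := by
    ext M
    simp only [Finset.mem_filter, mem_mtch]
    constructor
    · rintro ⟨⟨hsub, hd⟩, hgM⟩
      exact ⟨fun e he => Finset.mem_erase.mpr ⟨fun h => hgM (h ▸ he), hsub he⟩, hd⟩
    · rintro ⟨hsub, hd⟩
      exact ⟨⟨fun e he => Finset.mem_of_mem_erase (hsub he), hd⟩,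
        fun h => (Finset.mem_erase.mp (hsub h)).1 rfl⟩
  have key2 : ∑ M ∈ (mtch E).filter (fun M => g ∈ M), (-1 : ℝ) ^ M.card * y ^ M.card
      = - (y * fval (E.filter fun e => Disjoint e g) y) := by
    unfold fval
    rw [Finset.mul_sum, ← Finset.sum_neg_distrib]
    apply Finset.sum_nbij' (fun M => M.erase g) (fun M => insert g M)
    · intro M hM
      simp only [Finset.mem_filter, mem_mtch] at hM
      obtain ⟨⟨hsub, hd⟩, hgM⟩ := hM
      refine mem_mtch.mpr ⟨fun e he => ?_, fun e he f hf hef => ?_⟩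
      · obtain ⟨heg, heM⟩ := Finset.mem_erase.mp he
        exact Finset.mem_filter.mpr ⟨hsub heM, hd e heM g hgM heg⟩
      · exact hd e (Finset.mem_of_mem_erase he) f (Finset.mem_of_mem_erase hf) hef
    · intro M hM
      rw [mem_mtch] at hM
      obtain ⟨hsub, hd⟩ := hM
      have hgnM : g ∉ M := fun h => hgg (Finset.mem_filter.mp (hsub h)).2
      refine Finset.mem_filter.mpr ⟨mem_mtch.mpr ⟨?_, ?_⟩, Finset.mem_insert_self g M⟩
      · intro e he
        rcases Finset.mem_insert.mp he with h | h
        · exact h ▸ hg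
        · exact (Finset.mem_filter.mp (hsub h)).1
      · intro e he f hf hef
        rcases Finset.mem_insert.mp he with he' | he' <;> rcases Finset.mem_insert.mp hf with hf' | hf'
        · exact absurd (he'.trans hf'.symm) hef
        · subst he'; exact ((Finset.mem_filter.mp (hsub hf')).2).symm
        · subst hf'; exact (Finset.mem_filter.mp (hsub he')).2
        · exact hd e he' f hf' hef
    · intro M hM
      simp only [Finset.mem_filter] at hM
      exact Finset.insert_erase hM.2
    · intro M hM
      rw [mem_mtch] at hM
      have hgnM : g ∉ M := fun h => hgg (Finset.mem_filter.mp (hM.1 h)).2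
      exact Finset.erase_insert hgnM
    · intro M hM
      simp only [Finset.mem_filter] at hM
      have hpos : 0 < M.card := Finset.card_pos.mpr ⟨g, hM.2⟩
      have hcard : M.card = (M.erase g).card + 1 := by
        rw [Finset.card_erase_of_mem hM.2]; omega
      rw [hcard]; ring
  have hsplit := Finset.sum_filter_add_sum_filter_not (mtch E) (fun M => g ∉ M)
    (fun M => (-1 : ℝ) ^ M.card * y ^ M.card)
  have : (mtch E).filter (fun M => ¬ g ∉ M) = (mtch E).filter (fun M => g ∈ M) := by
    apply Finset.filter_congr; intro M _; simp
  rw [this, h1, key2] at hsplit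
  have h2 : fval E y = ∑ M ∈ mtch E, (-1:ℝ)^M.card * y^M.card := rfl
  have h3 : fval (E.erase g) y = ∑ M ∈ mtch (E.erase g), (-1:ℝ)^M.card * y^M.card := rfl
  linarith [hsplit, h2, h3]

lemma fval_star {E : Finset (Finset α)} {v : α} (h : ∀ e ∈ E, v ∈ e) (y : ℝ) :
    fval E y = 1 - E.card * y := by
  classical
  have hset : mtch E = insert ∅ (E.image (fun e => ({e} : Finset (Finset α)))) := by
    ext M
    simp only [mem_mtch, Finset.mem_insert, Finset.mem_image]
    constructor
    · rintro ⟨hsub, hd⟩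
      rcases Finset.eq_empty_or_nonempty M with h0 | ⟨e, he⟩
      · exact Or.inl h0
      · right
        refine ⟨e, hsub he, ?_⟩
        ext f
        simp only [Finset.mem_singleton]
        constructor
        · rintro rfl; exact he
        · intro hf
          by_contra hfe
          have := hd f hf e he hfe
          exact (Finset.not_disjoint_iff.mpr ⟨v, h f (hsub hf), h e (hsub he)⟩) this
    · rintro (rfl | ⟨e, he, rfl⟩)
      · exact ⟨Finset.empty_subset _, fun e he => by simp at he⟩
      · refine ⟨Finset.singleton_subset_iff.mpr he, fun a ha b hb hab => ?_⟩
        simp only [Finset.mem_singleton] at ha hb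
        exact absurd (ha.trans hb.symm) hab
  have hnm : (∅ : Finset (Finset α)) ∉ E.image (fun e => ({e} : Finset (Finset α))) := by
    simp
  unfold fval
  rw [hset, Finset.sum_insert hnm, Finset.sum_image (by intro a _ b _ hab; simpa using hab)]
  simp [Finset.sum_const, mul_comm]
  ring

def Pos (E : Finset (Finset α)) (c : ℝ) : Prop := ∀ y : ℝ, 0 ≤ y → y ≤ c → 0 < fval E y

lemma pos_mono : ∀ (n : ℕ) (E : Finset (Finset α)), E.card ≤ n → (∀ e ∈ E, e.Nonempty) →
    ∀ E' ⊆ E, ∀ c : ℝ, Pos E c → Pos E' c := by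
  intro n
  induction n with
  | zero =>
    intro E hcard _ E' hE' c hP
    have : E = ∅ := Finset.card_eq_zero.mp (Nat.le_zero.mp hcard)
    subst this
    rwa [Finset.subset_empty.mp hE']
  | succ n ih =>
    intro E hcard hne E' hE' c hP
    rcases eq_or_ne E' E with rfl | hEE
    · exact hP
    have hss : E' ⊂ E := lt_of_le_of_ne hE' hEE
    obtain ⟨g, hgE, hgE'⟩ := Finset.exists_of_ssubset hss
    have hgne : g.Nonempty := hne g hgE
    have hcard' : (E.erase g).card ≤ n := by
      have := Finset.card_erase_of_mem hgE
      have hpos : 0 < E.card := Finset.card_pos.mpr ⟨g, hgE⟩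
      omega
    have hne' : ∀ e ∈ E.erase g, e.Nonempty := fun e he => hne e (Finset.mem_of_mem_erase he)
    -- key step : Pos (E.erase g) c
    have hkey : Pos (E.erase g) c := by
      by_contra hnp
      simp only [Pos, not_forall] at hnp
      obtain ⟨y1, hy1a, hy1b, hy1c⟩ := hnp
      push_neg at hy1c
      set S : Set ℝ := {t | t ∈ Set.Icc (0:ℝ) c ∧ fval (E.erase g) t ≤ 0} with hS
      have hSne : S.Nonempty := ⟨y1, ⟨hy1a, hy1b⟩, hy1c⟩
      have hSbdd : BddBelow S := ⟨0, fun t ht => ht.1.1⟩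
      have hSclosed : IsClosed S := by
        have : S = Set.Icc (0:ℝ) c ∩ (fval (E.erase g)) ⁻¹' (Set.Iic 0) := by
          ext t
          simp only [hS, Set.mem_setOf_eq, Set.mem_inter_iff, Set.mem_preimage, Set.mem_Iic]
        rw [this]
        exact isClosed_Icc.inter (IsClosed.preimage (continuous_fval _) isClosed_Iic)
      have hy0mem : sInf S ∈ S := hSclosed.csInf_mem hSne hSbdd
      set y0 := sInf S with hy0
      have hy0pos : 0 < y0 := by
        rcases lt_or_eq_of_le hy0mem.1.1 with h | h
        · exact h
        · exfalso
          have := hy0mem.2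
          rw [← h, fval_at_zero] at this
          linarith
      have hbefore : ∀ t, 0 ≤ t → t < y0 → 0 < fval (E.erase g) t := by
        intro t ht0 hty0
        have htS : t ∉ S := fun hts => absurd (csInf_le hSbdd hts) (not_le.mpr hty0)
        have htc : t ≤ c := le_trans (le_of_lt hty0) hy0mem.1.2
        by_contra hle
        exact htS ⟨⟨ht0, htc⟩, le_of_not_gt hle⟩
      set F := E.filter (fun e => Disjoint e g) with hF
      have hFsub : F ⊆ E.erase g := by
        intro e he
        rw [Finset.mem_filter] at he
        refine Finset.mem_erase.mpr ⟨?_, he.1⟩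
        rintro rfl
        exact hgne.ne_empty (by simpa using disjoint_self.mp he.2)
      have hFpos : ∀ t, 0 ≤ t → t < y0 → 0 < fval F t := by
        intro t ht0 hty0
        have hPos_erase_t : Pos (E.erase g) t := fun s hs0 hst =>
          hbefore s hs0 (lt_of_le_of_lt hst hty0)
        exact ih (E.erase g) hcard' hne' F hFsub t hPos_erase_t t ht0 le_rfl
      have hFy0 : 0 ≤ fval F y0 := by
        have htend : Filter.Tendsto (fval F) (nhdsWithin y0 (Set.Iio y0)) (nhds (fval F y0)) :=
          ((continuous_fval F).tendsto y0).mono_left nhdsWithin_le_nhds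
        refine ge_of_tendsto htend ?_
        filter_upwards [Ioo_mem_nhdsLT_of_mem (Set.mem_Ioc.mpr ⟨hy0pos, le_rfl⟩)] with t ht
        exact le_of_lt (hFpos t (le_of_lt ht.1) ht.2)
      have hrec := fval_rec hgE hgne y0
      have hEy0 : 0 < fval E y0 := hP y0 (le_of_lt hy0pos) hy0mem.1.2
      have : fval E y0 ≤ 0 := by
        rw [hrec]
        have h1 : fval (E.erase g) y0 ≤ 0 := hy0mem.2
        have h2 : 0 ≤ y0 * fval F y0 := mul_nonneg (le_of_lt hy0pos) hFy0
        linarith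
      linarith
    exact ih (E.erase g) hcard' hne' E' (fun e he =>
      Finset.mem_erase.mpr ⟨fun h => hgE' (h ▸ he), hE' he⟩) c hkey

lemma not_pos : ∀ (n : ℕ) (E : Finset (Finset α)), E.card ≤ n → (∀ e ∈ E, e.Nonempty) →
    ∀ v : α, 0 < (E.filter (fun e => v ∈ e)).card →
    ¬ Pos E (1 / ((E.filter (fun e => v ∈ e)).card : ℝ)) := by
  intro n
  induction n with
  | zero =>
    intro E hc hne v hd
    rw [Finset.card_eq_zero.mp (Nat.le_zero.mp hc)] at hd
    simp at hd
  | succ n ih =>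
    intro E hc hne v hd
    by_cases hall : ∀ e ∈ E, v ∈ e
    · have hfe : E.filter (fun e => v ∈ e) = E := Finset.filter_true_of_mem hall
      rw [hfe] at hd ⊢
      intro hP
      have hcpos : (0:ℝ) < (E.card : ℝ) := Nat.cast_pos.mpr hd
      have := hP (1 / (E.card : ℝ)) (by positivity) le_rfl
      rw [fval_star hall] at this
      rw [mul_one_div, div_self (ne_of_gt hcpos)] at this
      linarith
    · push_neg at hall
      obtain ⟨g, hgE, hvg⟩ := hall
      intro hP
      have hfil : (E.erase g).filter (fun e => v ∈ e) = E.filter (fun e => v ∈ e) := by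
        ext e
        simp only [Finset.mem_filter, Finset.mem_erase]
        constructor
        · rintro ⟨⟨_, he⟩, hv⟩; exact ⟨he, hv⟩
        · rintro ⟨he, hv⟩; exact ⟨⟨fun h => hvg (h ▸ hv), he⟩, hv⟩
      have hcard' : (E.erase g).card ≤ n := by
        have := Finset.card_erase_of_mem hgE
        have hpos : 0 < E.card := Finset.card_pos.mpr ⟨g, hgE⟩
        omega
      have hne' : ∀ e ∈ E.erase g, e.Nonempty := fun e he => hne e (Finset.mem_of_mem_erase he)
      have hP' : Pos (E.erase g) (1 / ((E.filter (fun e => v ∈ e)).card : ℝ)) :=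
        pos_mono (n+1) E hc hne (E.erase g) (Finset.erase_subset g E) _ hP
      refine ih (E.erase g) hcard' hne' v ?_ ?_
      · rw [hfil]; exact hd
      · rw [hfil]; exact hP'

lemma exists_root {E : Finset (Finset α)} {c : ℝ}
    (h : ∃ y, 0 ≤ y ∧ y ≤ c ∧ fval E y ≤ 0) :
    ∃ y, 0 < y ∧ y ≤ c ∧ fval E y = 0 := by
  obtain ⟨y1, hy1a, hy1b, hy1c⟩ := h
  have h01 : (0:ℝ) ∈ Set.Icc (fval E y1) (fval E 0) := by
    rw [fval_at_zero]; exact ⟨hy1c, zero_le_one⟩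
  have := intermediate_value_Icc' hy1a (continuous_fval E).continuousOn h01
  obtain ⟨x, hx, hfx⟩ := this
  refine ⟨x, ?_, le_trans hx.2 hy1b, hfx⟩
  rcases lt_or_eq_of_le hx.1 with h | h
  · exact h
  · exfalso; rw [← h, fval_at_zero] at hfx; linarith

lemma not_pos_elim {E : Finset (Finset α)} {c : ℝ} (hc : 0 ≤ c) (h : ¬ Pos E c) :
    ∃ y, 0 ≤ y ∧ y ≤ c ∧ fval E y ≤ 0 := by
  simp only [Pos, not_forall] at h
  obtain ⟨y, h1, h2, h3⟩ := h
  exact ⟨y, h1, h2, le_of_not_gt h3⟩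

lemma strict_step {E : Finset (Finset α)} (hne : ∀ e ∈ E, e.Nonempty) {v : α} {e' g : Finset α}
    (he' : e' ∈ E) (hv : v ∈ e') (hg : g ∈ E) (hvg : v ∉ g) (hmeet : ¬ Disjoint e' g) :
    ∃ y : ℝ, 0 ≤ y ∧ y < 1 / ((E.filter (fun e => v ∈ e)).card : ℝ) ∧ fval E y ≤ 0 := by
  classical
  set S := E.filter (fun e => v ∈ e) with hSdef
  set d := S.card with hddef
  have he'S : e' ∈ S := Finset.mem_filter.mpr ⟨he', hv⟩
  have hdpos : 0 < d := Finset.card_pos.mpr ⟨e', he'S⟩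
  have hdposR : (0:ℝ) < (d:ℝ) := Nat.cast_pos.mpr hdpos
  have hgS : g ∉ S := fun h => hvg (Finset.mem_filter.mp h).2
  set E' : Finset (Finset α) := insert g S with hE'def
  have hE'sub : E' ⊆ E := by
    intro e he
    rcases Finset.mem_insert.mp he with rfl | h
    · exact hg
    · exact (Finset.mem_filter.mp h).1
  have hgne : g.Nonempty := hne g hg
  have hgg : ¬ Disjoint g g := fun h => hgne.ne_empty (by simpa using disjoint_self.mp h)
  set S' := S.filter (fun e => Disjoint e g) with hS'def
  set d' := S'.card with hd'def
  have hd' : d' < d := by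
    have hsub : S' ⊆ S.erase e' := by
      intro e he
      obtain ⟨heS, hedisj⟩ := Finset.mem_filter.mp he
      refine Finset.mem_erase.mpr ⟨?_, heS⟩
      rintro rfl; exact hmeet hedisj
    calc d' ≤ (S.erase e').card := Finset.card_le_card hsub
      _ = d - 1 := Finset.card_erase_of_mem he'S
      _ < d := by omega
  -- compute fval E' (1/d)
  have herase : E'.erase g = S := Finset.erase_insert hgS
  have hfilter : E'.filter (fun e => Disjoint e g) = S' := by
    rw [hE'def, Finset.filter_insert, if_neg hgg]
  have hstarS : ∀ e ∈ S, v ∈ e := fun e he => (Finset.mem_filter.mp he).2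
  have hstarS' : ∀ e ∈ S', v ∈ e := fun e he => hstarS e (Finset.mem_filter.mp he).1
  have hval : fval E' (1/(d:ℝ)) < 0 := by
    rw [fval_rec (Finset.mem_insert_self g S) hgne, herase, hfilter,
      fval_star hstarS, fval_star hstarS']
    rw [← hddef, ← hd'def]
    have h1 : (d:ℝ) * (1/(d:ℝ)) = 1 := by field_simp
    have h2 : (d':ℝ) * (1/(d:ℝ)) = (d':ℝ)/(d:ℝ) := by ring
    rw [h1, h2]
    have h3 : (d':ℝ)/(d:ℝ) < 1 := (div_lt_one hdposR).mpr (Nat.cast_lt.mpr hd')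
    have h4 : 0 < 1/(d:ℝ) := by positivity
    nlinarith
  by_contra hcon
  push_neg at hcon
  have hPosE : ∀ t : ℝ, 0 ≤ t → t < 1/(d:ℝ) → Pos E t := by
    intro t ht0 htd y hy0 hyt
    have := hcon y hy0 (lt_of_le_of_lt hyt htd)
    linarith
  have hE'pos : ∀ t : ℝ, 0 ≤ t → t < 1/(d:ℝ) → 0 < fval E' t := by
    intro t ht0 htd
    exact pos_mono E.card E le_rfl hne E' hE'sub t (hPosE t ht0 htd) t ht0 le_rfl
  have hlim : 0 ≤ fval E' (1/(d:ℝ)) := by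
    have htend : Filter.Tendsto (fval E') (nhdsWithin (1/(d:ℝ)) (Set.Iio (1/(d:ℝ))))
        (nhds (fval E' (1/(d:ℝ)))) :=
      ((continuous_fval E').tendsto _).mono_left nhdsWithin_le_nhds
    refine ge_of_tendsto htend ?_
    filter_upwards [Ioo_mem_nhdsLT_of_mem (Set.mem_Ioc.mpr ⟨by positivity, le_rfl⟩)] with t ht
    exact le_of_lt (hE'pos t (le_of_lt ht.1) ht.2)
  linarith

open FinHypergraph Polynomial in
lemma fval_group (H : FinHypergraph α) (y : ℝ) :
    fval H.edges y = ∑ r ∈ Finset.range (H.edges.card + 1),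
      (-1:ℝ)^r * (H.matchCount r : ℝ) * y ^ r := by
  classical
  have hmap : ∀ M ∈ mtch H.edges, M.card ∈ Finset.range (H.edges.card + 1) := by
    intro M hM
    rw [Finset.mem_range]
    exact Nat.lt_succ_of_le (Finset.card_le_card (mem_mtch.mp hM).1)
  unfold fval
  rw [← Finset.sum_fiberwise_of_maps_to hmap (fun M => (-1:ℝ)^M.card * y^M.card)]
  apply Finset.sum_congr rfl
  intro r _
  have hfe : (mtch H.edges).filter (fun M => M.card = r)
      = H.edges.powerset.filter (fun M => M.card = r ∧ H.IsMatching M) := by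
    ext M
    rw [Finset.mem_filter, Finset.mem_filter]
    simp only [Finset.mem_filter, mem_mtch, Finset.mem_powerset, IsMatching, disjFam]
    tauto
  calc ∑ M ∈ (mtch H.edges).filter (fun M => M.card = r), (-1:ℝ)^M.card * y^M.card
      = ∑ M ∈ (mtch H.edges).filter (fun M => M.card = r), (-1:ℝ)^r * y^r := by
        apply Finset.sum_congr rfl
        intro M hM
        rw [(Finset.mem_filter.mp hM).2]
    _ = ((mtch H.edges).filter (fun M => M.card = r)).card • ((-1:ℝ)^r * y^r) :=
        (Finset.sum_const _)
    _ = (-1:ℝ)^r * (H.matchCount r : ℝ) * y^r := by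
        rw [hfe, nsmul_eq_mul]
        rw [FinHypergraph.matchCount]
        ring

open FinHypergraph Polynomial in
lemma matchCount_le_card {H : FinHypergraph α} {k r : ℕ} (hu : H.IsUniform k)
    (h : H.matchCount r ≠ 0) : k * r ≤ H.verts.card := by
  classical
  rw [FinHypergraph.matchCount] at h
  obtain ⟨M, hM⟩ := Finset.card_pos.mp (Nat.pos_of_ne_zero h)
  rw [Finset.mem_filter] at hM
  simp only [Finset.mem_filter, Finset.mem_powerset, IsMatching] at hM
  obtain ⟨hsub, hcard, hsub2, hdisj⟩ := hM
  have hbi : (M.biUnion (fun e => e)) ⊆ H.verts := by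
    intro a ha
    obtain ⟨e, he, hae⟩ := Finset.mem_biUnion.mp ha
    exact H.edge_sub e (hsub he) hae
  have hcardbi : (M.biUnion (fun e => e)).card = k * r := by
    rw [Finset.card_biUnion hdisj]
    calc ∑ e ∈ M, e.card = ∑ e ∈ M, k := Finset.sum_congr rfl (fun e he => hu e (hsub he))
      _ = k * r := by rw [Finset.sum_const, smul_eq_mul, hcard, mul_comm]
  calc k * r = (M.biUnion (fun e => e)).card := hcardbi.symm
    _ ≤ H.verts.card := Finset.card_le_card hbi

open FinHypergraph Polynomial in
lemma eval_matchingPoly (H : FinHypergraph α) (k : ℕ) (x : ℝ) :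
    (H.matchingPoly k).eval x = ∑ r ∈ Finset.range (H.edges.card + 1),
      (-1:ℝ)^r * (H.matchCount r : ℝ) * x ^ (H.verts.card - k * r) := by
  rw [FinHypergraph.matchingPoly, Polynomial.eval_finset_sum]
  apply Finset.sum_congr rfl
  intro r _
  simp [mul_assoc]

open FinHypergraph Polynomial in
lemma aeval_matchingPoly (H : FinHypergraph α) (k : ℕ) (z : ℂ) :
    Polynomial.aeval z (H.matchingPoly k) = ∑ r ∈ Finset.range (H.edges.card + 1),
      (-1:ℂ)^r * (H.matchCount r : ℂ) * z ^ (H.verts.card - k * r) := by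
  rw [FinHypergraph.matchingPoly, map_sum]
  apply Finset.sum_congr rfl
  intro r _
  rw [map_mul, map_pow, Polynomial.aeval_X, Polynomial.aeval_C]
  push_cast
  ring

open FinHypergraph Polynomial in
lemma aeval_real (H : FinHypergraph α) (k : ℕ) (x : ℝ) :
    Polynomial.aeval ((x:ℂ)) (H.matchingPoly k) = (((H.matchingPoly k).eval x : ℝ) : ℂ) := by
  rw [aeval_matchingPoly, eval_matchingPoly]
  push_cast
  ring

open FinHypergraph Polynomial in
lemma eval_eq_fval (H : FinHypergraph α) {k : ℕ} (hu : H.IsUniform k) {x : ℝ} (hx : 0 < x) :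
    (H.matchingPoly k).eval x = x ^ H.verts.card * fval H.edges ((x^k)⁻¹) := by
  rw [eval_matchingPoly, fval_group, Finset.mul_sum]
  apply Finset.sum_congr rfl
  intro r _
  rcases eq_or_ne (H.matchCount r) 0 with h0 | h0
  · simp [h0]
  · have hkr := matchCount_le_card hu h0
    have hxne : x ≠ 0 := ne_of_gt hx
    have hpow : x ^ (H.verts.card - k * r) = x ^ H.verts.card * ((x^k)⁻¹)^r := by
      rw [inv_pow, ← pow_mul, pow_sub₀ x hxne hkr]
    rw [hpow]
    ring

lemma rpow_inv_pow {c : ℝ} (hc : 0 ≤ c) {k : ℕ} (hk : 0 < k) :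
    ((c ^ k : ℝ)) ^ ((1:ℝ)/(k:ℝ)) = c := by
  rw [← Real.rpow_natCast c k, ← Real.rpow_mul hc, mul_one_div,
    div_self (Nat.cast_ne_zero.mpr hk.ne'), Real.rpow_one]

open FinHypergraph Polynomial in
lemma matchCount_zero (H : FinHypergraph α) : H.matchCount 0 = 1 := by
  classical
  rw [FinHypergraph.matchCount]
  have : H.edges.powerset.filter (fun M => M.card = 0 ∧ H.IsMatching M) = {∅} := by
    ext M
    simp only [Finset.mem_filter, Finset.mem_powerset, Finset.mem_singleton,
      Finset.card_eq_zero, IsMatching]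
    constructor
    · rintro ⟨_, h, _⟩; exact h
    · rintro rfl
      refine ⟨Finset.empty_subset _, rfl, Finset.empty_subset _, ?_⟩
      intro e he; simp at he
  rw [this, Finset.card_singleton]

open FinHypergraph Polynomial in
lemma matchingPoly_ne_zero (H : FinHypergraph α) {k : ℕ} (hn : 0 < H.verts.card) (hk : 0 < k) :
    H.matchingPoly k ≠ 0 := by
  intro h
  have hcoeff : (H.matchingPoly k).coeff H.verts.card = 1 := by
    rw [FinHypergraph.matchingPoly, Polynomial.finset_sum_coeff]
    rw [Finset.sum_eq_single 0]
    · simp [matchCount_zero, Polynomial.coeff_C_mul, Polynomial.coeff_X_pow]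
    · intro r hr hr0
      rw [Polynomial.coeff_C_mul, Polynomial.coeff_X_pow, if_neg, mul_zero]
      have h1 : 0 < k * r := Nat.mul_pos hk (Nat.pos_of_ne_zero hr0)
      omega
    · intro h0
      exact absurd (Finset.mem_range.mpr (Nat.succ_pos _)) h0
  rw [h] at hcoeff
  simp at hcoeff

open FinHypergraph Polynomial in
lemma bddAbove_rootModuli {p : Polynomial ℝ} (hp : p ≠ 0) : BddAbove (FinHypergraph.rootModuli p) := by
  classical
  have hinj : Function.Injective (algebraMap ℝ ℂ) := (algebraMap ℝ ℂ).injective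
  have hmap : p.map (algebraMap ℝ ℂ) ≠ 0 := by
    intro h
    exact hp ((Polynomial.map_eq_zero_iff hinj).mp h)
  set T : Finset ℝ := (p.map (algebraMap ℝ ℂ)).roots.toFinset.image (fun z : ℂ => ‖z‖) with hT
  have hsub : FinHypergraph.rootModuli p ⊆ (T : Set ℝ) := by
    rintro m ⟨z, hz, rfl⟩
    have hzr : z ∈ (p.map (algebraMap ℝ ℂ)).roots := by
      rw [Polynomial.mem_roots hmap]
      rw [Polynomial.IsRoot, Polynomial.eval_map, ← Polynomial.aeval_def]
      exact hz
    simp only [hT, Finset.coe_image, Set.mem_image, Finset.mem_coe, Multiset.mem_toFinset]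
    exact ⟨z, hzr, rfl⟩
  exact BddAbove.mono hsub T.bddAbove

open FinHypergraph Polynomial in
lemma mem_rootModuli {H : FinHypergraph α} {k : ℕ} {x : ℝ} (hx : 0 ≤ x)
    (hroot : (H.matchingPoly k).eval x = 0) : x ∈ FinHypergraph.rootModuli (H.matchingPoly k) := by
  refine ⟨(x:ℂ), ?_, by simp [abs_of_nonneg hx]⟩
  rw [aeval_real, hroot]
  simp

open FinHypergraph Polynomial in
lemma le_lam {H : FinHypergraph α} {k : ℕ} (hp : H.matchingPoly k ≠ 0) {x : ℝ} (hx : 0 ≤ x)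
    (hroot : (H.matchingPoly k).eval x = 0) : x ≤ H.lam k :=
  le_csSup (bddAbove_rootModuli hp) (mem_rootModuli hx hroot)

open FinHypergraph Polynomial in
lemma matchCount_one (H : FinHypergraph α) : H.matchCount 1 = H.edges.card := by
  classical
  rw [FinHypergraph.matchCount]
  have : H.edges.powerset.filter (fun M => M.card = 1 ∧ H.IsMatching M)
      = H.edges.image (fun e => ({e} : Finset (Finset α))) := by
    ext M
    simp only [Finset.mem_filter, Finset.mem_powerset, Finset.mem_image, IsMatching,
      Finset.card_eq_one]
    constructor
    · rintro ⟨hsub, ⟨e, rfl⟩, _, _⟩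
      exact ⟨e, hsub (Finset.mem_singleton_self e), rfl⟩
    · rintro ⟨e, he, rfl⟩
      refine ⟨Finset.singleton_subset_iff.mpr he, ⟨e, rfl⟩,
        ⟨Finset.singleton_subset_iff.mpr he, ?_⟩⟩
      intro a ha b hb hab
      simp only [Finset.mem_singleton] at ha hb
      exact absurd (ha.trans hb.symm) hab
  rw [this, Finset.card_image_of_injective _ (fun a b h => by simpa using h)]

open FinHypergraph Polynomial in
lemma matchCount_star {H : FinHypergraph α} {v : α} (hstar : ∀ e ∈ H.edges, v ∈ e)
    {r : ℕ} (hr : 2 ≤ r) : H.matchCount r = 0 := by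
  classical
  rw [FinHypergraph.matchCount, Finset.card_eq_zero, Finset.filter_eq_empty_iff]
  rintro M hM ⟨hcard, hsub, hdisj⟩
  have h1 : 1 < M.card := by omega
  obtain ⟨a, ha, b, hb, hab⟩ := Finset.one_lt_card.mp h1
  exact Finset.not_disjoint_iff.mpr ⟨v, hstar a (hsub ha), hstar b (hsub hb)⟩ (hdisj a ha b hb hab)

open FinHypergraph Polynomial in
lemma aeval_star {H : FinHypergraph α} {k : ℕ} {v : α} (hstar : ∀ e ∈ H.edges, v ∈ e)
    (hm : 1 ≤ H.edges.card) (z : ℂ) :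
    Polynomial.aeval z (H.matchingPoly k)
      = z ^ H.verts.card - (H.edges.card : ℂ) * z ^ (H.verts.card - k) := by
  rw [aeval_matchingPoly]
  have hsub : ({0, 1} : Finset ℕ) ⊆ Finset.range (H.edges.card + 1) := by
    intro i hi
    simp only [Finset.mem_insert, Finset.mem_singleton] at hi
    rcases hi with rfl | rfl <;> rw [Finset.mem_range] <;> omega
  rw [← Finset.sum_subset hsub]
  · rw [Finset.sum_pair (by norm_num : (0:ℕ) ≠ 1)]
    rw [matchCount_zero, matchCount_one]
    simp
    ring
  · intro r hrange hrnot
    simp only [Finset.mem_insert, Finset.mem_singleton] at hrnot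
    push_neg at hrnot
    have : 2 ≤ r := by omega
    rw [matchCount_star hstar this]
    simp

open FinHypergraph Polynomial in
lemma lam_star {H : FinHypergraph α} {k : ℕ} (hk : 0 < k) {v : α}
    (hstar : ∀ e ∈ H.edges, v ∈ e) (hm : 1 ≤ H.edges.card) (hkn : k ≤ H.verts.card) :
    H.lam k = (H.edges.card : ℝ) ^ ((1:ℝ)/(k:ℝ)) := by
  classical
  set n := H.verts.card with hn
  set m := H.edges.card with hmdef
  set t : ℝ := (m:ℝ) ^ ((1:ℝ)/(k:ℝ)) with htdef
  have hmposR : (0:ℝ) < (m:ℝ) := Nat.cast_pos.mpr hm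
  have ht0 : 0 ≤ t := Real.rpow_nonneg (le_of_lt hmposR) _
  have hkne : (k:ℝ) ≠ 0 := Nat.cast_ne_zero.mpr hk.ne'
  have htk : t ^ k = (m:ℝ) := by
    rw [htdef, ← Real.rpow_natCast ((m:ℝ) ^ ((1:ℝ)/(k:ℝ))) k, ← Real.rpow_mul (le_of_lt hmposR),
      one_div, inv_mul_cancel₀ hkne, Real.rpow_one]
  have hple : H.matchingPoly k ≠ 0 := matchingPoly_ne_zero H (lt_of_lt_of_le hk hkn) hk
  have hroot : (H.matchingPoly k).eval t = 0 := by
    have h1 : (((H.matchingPoly k).eval t : ℝ) : ℂ)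
        = (t:ℂ) ^ n - (m : ℂ) * (t:ℂ) ^ (n - k) := by
      rw [← aeval_real, aeval_star hstar hm]
    have h2 : (t:ℂ) ^ n - (m:ℂ) * (t:ℂ) ^ (n - k) = 0 := by
      have : (t:ℂ) ^ n = (t:ℂ) ^ (n - k) * (t:ℂ) ^ k := by
        rw [← pow_add, Nat.sub_add_cancel hkn]
      rw [this]
      have htkC : (t:ℂ) ^ k = (m:ℂ) := by exact_mod_cast congrArg (fun r : ℝ => (r:ℂ)) htk
      rw [htkC]
      ring
    rw [h2] at h1
    exact_mod_cast h1
  have hmem := mem_rootModuli ht0 hroot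
  have hub : ∀ s ∈ FinHypergraph.rootModuli (H.matchingPoly k), s ≤ t := by
    rintro s ⟨z, hz, rfl⟩
    rw [aeval_star hstar hm] at hz
    have hfac : z ^ (n - k) * (z ^ k - (m:ℂ)) = 0 := by
      have : z ^ (n-k) * z ^ k = z ^ n := by rw [← pow_add, Nat.sub_add_cancel hkn]
      calc z ^ (n - k) * (z ^ k - (m:ℂ)) = z ^ n - (m:ℂ) * z ^ (n-k) := by rw [mul_sub, this]; ring
        _ = 0 := hz
    rcases mul_eq_zero.mp hfac with h | h
    · have hz0 : z = 0 := by
        by_contra hzne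
        exact (pow_ne_zero _ hzne) h
      rw [hz0]
      simpa using ht0
    · have hzk : z ^ k = (m:ℂ) := by linear_combination h
      have habs : ‖z‖ ^ k = (m:ℝ) := by
        rw [← norm_pow, hzk]
        simp
      have : ‖z‖ = t := by
        rw [← rpow_inv_pow (norm_nonneg z) hk, habs]
      rw [this]
  exact le_antisymm (csSup_le ⟨t, hmem⟩ hub) (le_csSup (bddAbove_rootModuli hple) hmem)

open FinHypergraph Polynomial in
lemma root_of_fval_root {H : FinHypergraph α} {k : ℕ} (hu : H.IsUniform k) (hk : 0 < k)
    {y : ℝ} (hy0 : 0 < y) (hyroot : fval H.edges y = 0) :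
    ∃ x : ℝ, 0 < x ∧ x ^ k = y⁻¹ ∧ (H.matchingPoly k).eval x = 0 := by
  set x := (y⁻¹) ^ ((1:ℝ)/(k:ℝ)) with hxdef
  have hyinv : 0 < y⁻¹ := inv_pos.mpr hy0
  have hx0 : 0 < x := Real.rpow_pos_of_pos hyinv _
  have hxk : x ^ k = y⁻¹ := by
    rw [hxdef, ← Real.rpow_natCast ((y⁻¹) ^ ((1:ℝ)/(k:ℝ))) k, ← Real.rpow_mul (le_of_lt hyinv),
      one_div, inv_mul_cancel₀ (Nat.cast_ne_zero.mpr hk.ne'), Real.rpow_one]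
  refine ⟨x, hx0, hxk, ?_⟩
  rw [eval_eq_fval H hu hx0, hxk, inv_inv, hyroot, mul_zero]

open FinHypergraph in
lemma exists_meeting_edge (H : FinHypergraph α) (hconn : H.Connected)
    (hedge_ne : ∀ e ∈ H.edges, e.Nonempty) {v : α} (hv : 0 < H.degree v)
    {g0 : Finset α} (hg0 : g0 ∈ H.edges) (hvg0 : v ∉ g0) :
    ∃ e' g, e' ∈ H.edges ∧ g ∈ H.edges ∧ v ∈ e' ∧ v ∉ g ∧ ¬ Disjoint e' g := by
  classical
  by_contra hcon
  push_neg at hcon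
  obtain ⟨ev, hev⟩ := Finset.card_pos.mp hv
  obtain ⟨hevE, hvev⟩ := Finset.mem_filter.mp hev
  set A : Set α := {a | ∃ e ∈ H.edges, v ∈ e ∧ a ∈ e} with hA
  have hvA : v ∈ A := ⟨ev, hevE, hvev, hvev⟩
  have hstep : ∀ a b, H.Adj a b → a ∈ A → b ∈ A := by
    rintro a b ⟨e, he, hae, hbe⟩ ⟨e1, he1, hve1, hae1⟩
    by_cases hve : v ∈ e
    · exact ⟨e, he, hve, hbe⟩
    · exact absurd (hcon e1 e he1 he hve1 hve) (Finset.not_disjoint_iff.mpr ⟨a, hae1, hae⟩)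
  have hreach : ∀ b, Relation.ReflTransGen H.Adj v b → b ∈ A := by
    intro b hb
    induction hb with
    | refl => exact hvA
    | tail h hadj ih => exact hstep _ _ hadj ih
  obtain ⟨b0, hb0⟩ := hedge_ne g0 hg0
  have hvin : v ∈ H.verts := H.edge_sub _ hevE hvev
  have hb0v : b0 ∈ H.verts := H.edge_sub _ hg0 hb0
  obtain ⟨e1, he1, hve1, hb0e1⟩ := hreach b0 (hconn.2 v hvin b0 hb0v)
  exact absurd (hcon e1 g0 he1 hg0 hve1 hvg0) (Finset.not_disjoint_iff.mpr ⟨b0, hb0e1, hb0⟩)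

end MP

open FinHypergraph Polynomial MP

/-- For a connected `k`-graph `H` with maximum degree `Δ`, the largest (real) root
`λ(H)` of `μ(H,x)` satisfies `λ(H) ≥ Δ^{1/k}`, with equality iff all edges of `H`
share a common vertex. -/
theorem lam_ge_maxDegree_rpow {α : Type*} [DecidableEq α]
    (H : FinHypergraph α) (k Δ : ℕ) (hk : 2 ≤ k) (hH : H.IsUniform k)
    (hconn : H.Connected) (hΔ : H.maxDegree Δ) :
    (Δ : ℝ) ^ ((1 : ℝ) / (k : ℝ)) ≤ H.lam k ∧
      (H.lam k = (Δ : ℝ) ^ ((1 : ℝ) / (k : ℝ)) ↔ ∃ v, ∀ e ∈ H.edges, v ∈ e) := by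
  classical
  have hk0 : 0 < k := by omega
  have hnpos : 0 < H.verts.card := Finset.card_pos.mpr hconn.1
  have hedge_ne : ∀ e ∈ H.edges, e.Nonempty := fun e he =>
    Finset.card_pos.mp (by rw [hH e he]; omega)
  have hple : H.matchingPoly k ≠ 0 := matchingPoly_ne_zero H hnpos hk0
  by_cases hE : H.edges = ∅
  · -- no edges: Δ = 0, lam = 0
    have hΔ0 : Δ = 0 := by
      obtain ⟨u, _, hud⟩ := hΔ.2
      rw [FinHypergraph.degree, hE] at hud
      simp at hud
      omega
    subst hΔ0
    have haev : ∀ z : ℂ, Polynomial.aeval z (H.matchingPoly k) = z ^ H.verts.card := by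
      intro z
      rw [aeval_matchingPoly, hE]
      simp [matchCount_zero]
    have hrm : FinHypergraph.rootModuli (H.matchingPoly k) = {0} := by
      ext s
      constructor
      · rintro ⟨z, hz, rfl⟩
        rw [haev] at hz
        have : z = 0 := by
          by_contra hzne
          exact (pow_ne_zero _ hzne) hz
        simp [this]
      · rintro rfl
        refine ⟨0, ?_, by simp⟩
        rw [haev, zero_pow (by omega)]
    have hlam : H.lam k = 0 := by rw [FinHypergraph.lam, hrm, csSup_singleton]
    have hrhs : ((0:ℕ) : ℝ) ^ ((1:ℝ)/(k:ℝ)) = 0 := by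
      rw [Nat.cast_zero, Real.zero_rpow]
      positivity
    rw [hlam, hrhs]
    refine ⟨le_refl _, ?_⟩
    constructor
    · intro _
      obtain ⟨a, _⟩ := hconn.1
      exact ⟨a, by rw [hE]; intro e he; simp at he⟩
    · intro _; rfl
  · -- edges nonempty
    obtain ⟨g0, hg0⟩ := Finset.nonempty_iff_ne_empty.mpr hE
    have hΔpos : 0 < Δ := by
      obtain ⟨b, hb⟩ := hedge_ne g0 hg0
      have : 0 < H.degree b := Finset.card_pos.mpr ⟨g0, Finset.mem_filter.mpr ⟨hg0, hb⟩⟩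
      exact lt_of_lt_of_le this (hΔ.1 b)
    obtain ⟨u, hu, hud⟩ := hΔ.2
    have hΔposR : (0:ℝ) < (Δ:ℝ) := Nat.cast_pos.mpr hΔpos
    have hudeg : 0 < H.degree u := by omega
    set t : ℝ := (Δ:ℝ) ^ ((1:ℝ)/(k:ℝ)) with htdef
    have hcastd : ((H.edges.filter (fun e => u ∈ e)).card : ℝ) = (Δ:ℝ) := by
      exact_mod_cast congrArg (fun i : ℕ => (i:ℝ)) hud
    -- Part 1 : inequality
    have hineq : t ≤ H.lam k := by
      have hnp : ¬ Pos H.edges (1/(Δ:ℝ)) := by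
        have := not_pos H.edges.card H.edges le_rfl hedge_ne u (by rw [FinHypergraph.degree] at hud; omega)
        rwa [hcastd] at this
      obtain ⟨y, hy0, hyle, hyroot⟩ := exists_root (not_pos_elim (by positivity) hnp)
      obtain ⟨x, hx0, hxk, hxroot⟩ := root_of_fval_root hH hk0 hy0 hyroot
      have hΔle : (Δ:ℝ) ≤ x ^ k := by
        rw [hxk, show (y⁻¹ : ℝ) = 1/y from (one_div y).symm, le_div_iff₀ hy0]
        have h1 : y * (Δ:ℝ) ≤ 1 := (le_div_iff₀ hΔposR).mp hyle
        linarith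
      have htle : t ≤ x := by
        calc t = (Δ:ℝ) ^ ((1:ℝ)/(k:ℝ)) := rfl
          _ ≤ (x ^ k) ^ ((1:ℝ)/(k:ℝ)) :=
            Real.rpow_le_rpow (le_of_lt hΔposR) hΔle (by positivity)
          _ = x := rpow_inv_pow (le_of_lt hx0) hk0
      exact le_trans htle (le_lam hple (le_of_lt hx0) hxroot)
    refine ⟨hineq, ?_, ?_⟩
    · -- lam = t → star
      intro hlam
      by_contra hnstar
      push_neg at hnstar
      obtain ⟨g1, hg1, hvg1⟩ := hnstar u
      obtain ⟨e', g, he', hg, hve', hvg, hmeet⟩ :=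
        exists_meeting_edge H hconn hedge_ne hudeg hg1 hvg1
      obtain ⟨y1, hy10, hy1lt, hy1le⟩ := strict_step hedge_ne he' hve' hg hvg hmeet
      rw [hcastd] at hy1lt
      obtain ⟨y, hy0, hyle, hyroot⟩ := exists_root ⟨y1, hy10, le_rfl, hy1le⟩
      obtain ⟨x, hx0, hxk, hxroot⟩ := root_of_fval_root hH hk0 hy0 hyroot
      have hylt : y < 1/(Δ:ℝ) := lt_of_le_of_lt hyle hy1lt
      have hΔlt : (Δ:ℝ) < x ^ k := by
        rw [hxk, show (y⁻¹ : ℝ) = 1/y from (one_div y).symm, lt_div_iff₀ hy0]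
        have h1 : y * (Δ:ℝ) < 1 := (lt_div_iff₀ hΔposR).mp hylt
        linarith
      have htlt : t < x := by
        calc t = (Δ:ℝ) ^ ((1:ℝ)/(k:ℝ)) := rfl
          _ < (x ^ k) ^ ((1:ℝ)/(k:ℝ)) :=
            Real.rpow_lt_rpow (le_of_lt hΔposR) hΔlt (by positivity)
          _ = x := rpow_inv_pow (le_of_lt hx0) hk0
      have : x ≤ H.lam k := le_lam hple (le_of_lt hx0) hxroot
      rw [hlam] at this
      linarith
    · -- star → lam = t
      rintro ⟨v, hstar⟩
      have hm1 : 1 ≤ H.edges.card := Finset.card_pos.mpr ⟨g0, hg0⟩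
      have hkn : k ≤ H.verts.card := by
        calc k = g0.card := (hH g0 hg0).symm
          _ ≤ H.verts.card := Finset.card_le_card (H.edge_sub g0 hg0)
      have hmΔ : H.edges.card = Δ := by
        have h1 : H.degree v = H.edges.card := by
          rw [FinHypergraph.degree, Finset.filter_true_of_mem hstar]
        have h2 : H.degree u ≤ H.edges.card := Finset.card_le_card (Finset.filter_subset _ _)
        have h3 := hΔ.1 v
        omega
      rw [lam_star hk0 hstar hm1 hkn, hmΔ]
end

section
/- Let H be a connected k-uniform hypergraph with maximum degree Δ ≥ 2. Then for all real x ≥ (k/(k−1))·((k−1)(Δ−1))^{1/k}, the matching polynomial satisfies μ(H,x) > 0. In particular, every real zero of μ(H,x) is strictly less than (k/(k−1))·((k−1)(Δ−1))^{1/k}. -/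
open scoped Classical

structure Hypergraph' (α : Type*) [DecidableEq α] where
  verts : Finset α
  edges : Finset (Finset α)
  edge_sub : ∀ e ∈ edges, e ⊆ verts

namespace Hypergraph'

variable {α : Type*} [DecidableEq α] {β : Type*} [DecidableEq β]

/-- `H` is `k`-uniform: every edge has exactly `k` vertices. -/
def IsUniform (H : Hypergraph' α) (k : ℕ) : Prop := ∀ e ∈ H.edges, e.card = k

/-- The degree of a vertex: the number of edges containing it. -/
def degree (H : Hypergraph' α) (v : α) : ℕ := (H.edges.filter (fun e => v ∈ e)).card

/-- `Δ` is the maximum degree of `H`. -/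
def maxDegree (H : Hypergraph' α) (Δ : ℕ) : Prop :=
  (∀ v, H.degree v ≤ Δ) ∧ ∃ v ∈ H.verts, H.degree v = Δ

/-- Two vertices are adjacent if some edge contains both. -/
def Adj (H : Hypergraph' α) (a b : α) : Prop := ∃ e ∈ H.edges, a ∈ e ∧ b ∈ e

/-- `H` is connected: nonempty and any two vertices joined by a walk. -/
def Connected (H : Hypergraph' α) : Prop :=
  H.verts.Nonempty ∧ ∀ a ∈ H.verts, ∀ b ∈ H.verts, Relation.ReflTransGen H.Adj a b

/-- A matching: a set of pairwise disjoint edges of `H`. -/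
def IsMatching (H : Hypergraph' α) (M : Finset (Finset α)) : Prop :=
  M ⊆ H.edges ∧ ∀ e ∈ M, ∀ f ∈ M, e ≠ f → Disjoint e f

/-- `p(H, r)`: the number of matchings of size `r`. -/
noncomputable def matchCount (H : Hypergraph' α) (r : ℕ) : ℕ :=
  (H.edges.powerset.filter (fun M => M.card = r ∧ H.IsMatching M)).card

/-- The matching polynomial `μ(H,x) = Σ_r (-1)^r p(H,r) x^{|V| - k r}`. -/
noncomputable def matchingPoly (H : Hypergraph' α) (k : ℕ) : Polynomial ℝ :=
  ∑ r ∈ Finset.range (H.edges.card + 1),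
    Polynomial.C ((-1 : ℝ) ^ r * (H.matchCount r : ℝ)) * Polynomial.X ^ (H.verts.card - k * r)

/-- Deleting a set of vertices: induced sub-hypergraph on `verts \ W`. -/
def delete (H : Hypergraph' α) (W : Finset α) : Hypergraph' α where
  verts := H.verts \ W
  edges := H.edges.filter (fun e => Disjoint e W)
  edge_sub := by
    intro e he
    simp only [Finset.mem_filter] at he
    exact Finset.subset_sdiff.mpr ⟨H.edge_sub e he.1, he.2⟩

/-- The set of moduli of the complex zeros of a real polynomial. -/
def rootModuli (p : Polynomial ℝ) : Set ℝ :=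
  {m | ∃ z : ℂ, (Polynomial.aeval z) p = 0 ∧ ‖z‖ = m}

/-- `λ(H)`: the maximum modulus of the complex zeros of the matching polynomial. -/
noncomputable def lam (H : Hypergraph' α) (k : ℕ) : ℝ :=
  sSup (rootModuli (H.matchingPoly k))

end Hypergraph'

namespace Hypergraph'

variable {α : Type*} [DecidableEq α]


noncomputable def mset (H : Hypergraph' α) : Finset (Finset (Finset α)) :=
  H.edges.powerset.filter (fun M => H.IsMatching M)

lemma mem_mset {H : Hypergraph' α} {M : Finset (Finset α)} :
    M ∈ H.mset ↔ H.IsMatching M := by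
  constructor
  · intro h; exact (Finset.mem_filter.1 h).2
  · intro h; exact Finset.mem_filter.2 ⟨Finset.mem_powerset.2 h.1, h⟩

noncomputable def mu (H : Hypergraph' α) (k : ℕ) (x : ℝ) : ℝ :=
  ∑ M ∈ H.mset, (-1 : ℝ) ^ M.card * x ^ (H.verts.card - k * M.card)

lemma eval_eq_mu (H : Hypergraph' α) (k : ℕ) (x : ℝ) :
    (H.matchingPoly k).eval x = H.mu k x := by
  have hmaps : ∀ M ∈ H.mset, M.card ∈ Finset.range (H.edges.card + 1) := by
    intro M hM
    exact Finset.mem_range.2 (Nat.lt_succ_of_le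
      (Finset.card_le_card (Finset.mem_powerset.1 (Finset.mem_filter.1 hM).1)))
  have key := Finset.sum_fiberwise_of_maps_to hmaps
    (fun M : Finset (Finset α) => (-1 : ℝ) ^ M.card * x ^ (H.verts.card - k * M.card))
  rw [mu, ← key, matchingPoly, Polynomial.eval_finset_sum]
  refine Finset.sum_congr rfl ?_
  intro r _
  have hcount : H.matchCount r = (H.mset.filter (fun M => M.card = r)).card := by
    rw [matchCount, mset, Finset.filter_filter]
    congr 1
    apply Finset.filter_congr
    intro M _
    simp [and_comm]
  have : ∑ M ∈ H.mset.filter (fun M => M.card = r),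
      (-1 : ℝ) ^ M.card * x ^ (H.verts.card - k * M.card)
      = (H.mset.filter (fun M => M.card = r)).card • ((-1 : ℝ) ^ r * x ^ (H.verts.card - k * r)) := by
    rw [← Finset.sum_const]
    apply Finset.sum_congr rfl
    intro M hM
    rw [(Finset.mem_filter.1 hM).2]
  rw [this, hcount]
  simp [mul_assoc, mul_comm, mul_left_comm]

lemma matching_kcard_le {H : Hypergraph' α} {k : ℕ} (hH : H.IsUniform k)
    {M : Finset (Finset α)} (hM : H.IsMatching M) : k * M.card ≤ H.verts.card := by
  have h1 : k * M.card = ∑ e ∈ M, e.card := by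
    rw [Finset.sum_congr rfl (fun e he => hH e (hM.1 he))]
    simp [mul_comm]
  have h2 : ∑ e ∈ M, e.card = (M.biUnion id).card := by
    rw [Finset.card_biUnion]
    · simp
    · intro e he f hf hef
      exact hM.2 e he f hf hef
  rw [h1, h2]
  apply Finset.card_le_card
  intro a ha
  rcases Finset.mem_biUnion.1 ha with ⟨e, he, hae⟩
  exact H.edge_sub e (hM.1 he) hae

lemma hg_ext {H1 H2 : Hypergraph' α} (hv : H1.verts = H2.verts) (he : H1.edges = H2.edges) :
    H1 = H2 := by
  cases H1; cases H2; simp_all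

lemma delete_delete (H : Hypergraph' α) (W W' : Finset α) :
    (H.delete W).delete W' = H.delete (W ∪ W') := by
  apply hg_ext
  · ext a; simp [delete]; tauto
  · simp only [delete, Finset.filter_filter]
    apply Finset.filter_congr
    intro e _
    simp [Finset.disjoint_union_right]

lemma isUniform_delete {H : Hypergraph' α} {k : ℕ} (hH : H.IsUniform k) (W : Finset α) :
    (H.delete W).IsUniform k := by
  intro e he
  exact hH e (Finset.mem_filter.1 he).1

lemma degree_delete_le (H : Hypergraph' α) (W : Finset α) (u : α) :
    (H.delete W).degree u ≤ H.degree u := by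
  apply Finset.card_le_card
  exact Finset.filter_subset_filter _ (Finset.filter_subset _ _)

lemma degree_delete_le_pred {H : Hypergraph' α} {W : Finset α} {u : α} {e : Finset α}
    (he : e ∈ H.edges) (hue : u ∈ e) (hW : ¬ Disjoint e W) :
    (H.delete W).degree u ≤ H.degree u - 1 := by
  have hsub : ((H.delete W).edges.filter (fun f => u ∈ f)) ⊆
      (H.edges.filter (fun f => u ∈ f)).erase e := by
    intro f hf
    rw [Finset.mem_filter] at hf
    rcases hf with ⟨hf1, hf2⟩
    rw [delete, Finset.mem_filter] at hf1
    refine Finset.mem_erase.2 ⟨?_, Finset.mem_filter.2 ⟨hf1.1, hf2⟩⟩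
    rintro rfl
    exact hW hf1.2
  calc (H.delete W).degree u ≤ ((H.edges.filter (fun f => u ∈ f)).erase e).card :=
        Finset.card_le_card hsub
    _ = H.degree u - 1 := by
        rw [Finset.card_erase_of_mem (Finset.mem_filter.2 ⟨he, hue⟩)]; rfl

lemma verts_delete_card {H : Hypergraph' α} {W : Finset α} (hW : W ⊆ H.verts) :
    (H.delete W).verts.card = H.verts.card - W.card := by
  simp [delete, Finset.card_sdiff_of_subset hW]

lemma mu_rec (H : Hypergraph' α) {k : ℕ} (hk : 2 ≤ k) (hH : H.IsUniform k) (x : ℝ)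
    {v : α} (hv : v ∈ H.verts) :
    H.mu k x = x * (H.delete {v}).mu k x
      - ∑ e ∈ H.edges.filter (fun e => v ∈ e), (H.delete e).mu k x := by
  classical
  set n := H.verts.card with hn
  set Ev := H.edges.filter (fun e => v ∈ e) with hEv
  set f : Finset (Finset α) → ℝ :=
    fun M => (-1 : ℝ) ^ M.card * x ^ (n - k * M.card) with hf
  -- split the sum
  have hsplit : H.mu k x
      = ∑ M ∈ H.mset.filter (fun M => ∀ e ∈ M, v ∉ e), f M
        + ∑ M ∈ H.mset.filter (fun M => ¬ ∀ e ∈ M, v ∉ e), f M := by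
    rw [mu, ← Finset.sum_filter_add_sum_filter_not H.mset (fun M => ∀ e ∈ M, v ∉ e) f]
  -- first part: matchings avoiding v
  have h1 : H.mset.filter (fun M => ∀ e ∈ M, v ∉ e) = (H.delete {v}).mset := by
    ext M
    simp only [Finset.mem_filter, mem_mset]
    constructor
    · rintro ⟨⟨hsub, hdisj⟩, havoid⟩
      refine ⟨?_, hdisj⟩
      intro e he
      exact Finset.mem_filter.2 ⟨hsub he, Finset.disjoint_singleton_right.2 (havoid e he)⟩
    · rintro ⟨hsub, hdisj⟩
      refine ⟨⟨?_, hdisj⟩, ?_⟩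
      · intro e he; exact (Finset.mem_filter.1 (hsub he)).1
      · intro e he; exact Finset.disjoint_singleton_right.1 (Finset.mem_filter.1 (hsub he)).2
  have hcard1 : (H.delete {v}).verts.card = n - 1 := by
    rw [verts_delete_card (Finset.singleton_subset_iff.2 hv)]; simp [hn]
  have h1sum : ∑ M ∈ (H.delete {v}).mset, f M = x * (H.delete {v}).mu k x := by
    rw [mu, Finset.mul_sum]
    apply Finset.sum_congr rfl
    intro M hM
    have hle : k * M.card ≤ n - 1 := by
      rw [← hcard1]
      exact matching_kcard_le (isUniform_delete hH _) (mem_mset.1 hM)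
    have hn1 : 1 ≤ n := Finset.card_pos.2 ⟨v, hv⟩ 
    have hexp : n - k * M.card = (n - 1 - k * M.card) + 1 := by omega
    show (-1 : ℝ) ^ M.card * x ^ (n - k * M.card)
      = x * ((-1 : ℝ) ^ M.card * x ^ ((H.delete {v}).verts.card - k * M.card))
    rw [hcard1, hexp, pow_succ]
    ring
  -- second part: matchings containing an edge at v
  have h2 : H.mset.filter (fun M => ¬ ∀ e ∈ M, v ∉ e)
      = Ev.biUnion (fun e => H.mset.filter (fun M => e ∈ M)) := by
    ext M
    simp only [Finset.mem_filter, Finset.mem_biUnion, hEv]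
    constructor
    · rintro ⟨hM, hex⟩
      push_neg at hex
      rcases hex with ⟨e, heM, hve⟩
      exact ⟨e, ⟨(mem_mset.1 hM).1 heM, hve⟩, hM, heM⟩
    · rintro ⟨e, ⟨heE, hve⟩, hM, heM⟩
      refine ⟨hM, ?_⟩
      push_neg
      exact ⟨e, heM, hve⟩
  have hdisjfibers : (↑Ev : Set (Finset α)).PairwiseDisjoint
      (fun e => H.mset.filter (fun M => e ∈ M)) := by
    intro e he e' he' hee
    simp only [Finset.disjoint_left, Finset.mem_filter]
    rintro M ⟨hM, heM⟩ ⟨hM', heM'⟩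
    have := (mem_mset.1 hM).2 e heM e' heM' hee
    have hv1 : v ∈ e := (Finset.mem_filter.1 (by simpa [hEv] using he : e ∈ Ev)).2
    have hv2 : v ∈ e' := (Finset.mem_filter.1 (by simpa [hEv] using he' : e' ∈ Ev)).2
    exact Finset.disjoint_left.1 this hv1 hv2
  -- fiber sums
  have hfiber : ∀ e ∈ Ev, ∑ M ∈ H.mset.filter (fun M => e ∈ M), f M
      = - (H.delete e).mu k x := by
    intro e he
    have heE : e ∈ H.edges := (Finset.mem_filter.1 he).1
    have heV : e ⊆ H.verts := H.edge_sub e heE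
    have hek : e.card = k := hH e heE
    have hcardE : (H.delete e).verts.card = n - k := by
      rw [verts_delete_card heV, hek]
    have henotself : e ∉ (H.delete e).edges := by
      intro hmem
      have : Disjoint e e := (Finset.mem_filter.1 hmem).2
      have : e = ∅ := by simpa using disjoint_self.1 this
      rw [this] at hek; simp at hek; omega
    rw [mu, ← Finset.sum_neg_distrib]
    apply Finset.sum_nbij' (fun M => M.erase e) (fun M' => insert e M')
    · -- maps to
      intro M hM
      rw [Finset.mem_filter] at hM
      rcases hM with ⟨hM, heM⟩
      rcases mem_mset.1 hM with ⟨hsub, hdisj⟩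
      apply mem_mset.2
      constructor
      · intro g hg
        rcases Finset.mem_erase.1 hg with ⟨hge, hgM⟩
        exact Finset.mem_filter.2 ⟨hsub hgM, hdisj g hgM e heM hge⟩
      · intro a ha b hb hab
        exact hdisj a (Finset.mem_of_mem_erase ha) b (Finset.mem_of_mem_erase hb) hab
    · -- reverse maps to
      intro M' hM'
      rcases mem_mset.1 hM' with ⟨hsub, hdisj⟩
      refine Finset.mem_filter.2 ⟨mem_mset.2 ⟨?_, ?_⟩, Finset.mem_insert_self e M'⟩
      · intro g hg
        rcases Finset.mem_insert.1 hg with rfl | hgM'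
        · exact heE
        · exact (Finset.mem_filter.1 (hsub hgM')).1
      · intro a ha b hb hab
        rcases Finset.mem_insert.1 ha with rfl | haM'
        · rcases Finset.mem_insert.1 hb with rfl | hbM'
          · exact absurd rfl hab
          · exact ((Finset.mem_filter.1 (hsub hbM')).2).symm
        · rcases Finset.mem_insert.1 hb with rfl | hbM'
          · exact (Finset.mem_filter.1 (hsub haM')).2
          · exact hdisj a haM' b hbM' hab
    · -- left inverse
      intro M hM
      exact Finset.insert_erase (Finset.mem_filter.1 hM).2
    · -- right inverse
      intro M' hM'
      apply Finset.erase_insert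
      intro hmem
      exact henotself ((mem_mset.1 hM').1 hmem)
    · -- values
      intro M hM
      have heM : e ∈ M := (Finset.mem_filter.1 hM).2
      have hc : M.card = (M.erase e).card + 1 := by
        rw [Finset.card_erase_of_mem heM]
        have : 1 ≤ M.card := Finset.card_pos.2 ⟨e, heM⟩
        omega
      show (-1 : ℝ) ^ M.card * x ^ (n - k * M.card)
        = -((-1 : ℝ) ^ (M.erase e).card * x ^ ((H.delete e).verts.card - k * (M.erase e).card))
      have hexp : n - k * ((M.erase e).card + 1) = n - k - k * (M.erase e).card := by
        have h : k * ((M.erase e).card + 1) = k * (M.erase e).card + k := by ring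
        omega
      rw [hcardE, hc, hexp, pow_succ]
      ring
  have h2sum : ∑ M ∈ H.mset.filter (fun M => ¬ ∀ e ∈ M, v ∉ e), f M
      = - ∑ e ∈ Ev, (H.delete e).mu k x := by
    rw [h2, Finset.sum_biUnion hdisjfibers, ← Finset.sum_neg_distrib]
    exact Finset.sum_congr rfl hfiber
  rw [hsplit, h1, h1sum, h2sum]
  ring

lemma isMatching_empty (H : Hypergraph' α) : H.IsMatching ∅ :=
  ⟨Finset.empty_subset _, by simp⟩

lemma mu_of_verts_empty {H : Hypergraph' α} {k : ℕ} (hk : 1 ≤ k) (hH : H.IsUniform k)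
    (h : H.verts = ∅) (x : ℝ) : H.mu k x = 1 := by
  have hedges : H.edges = ∅ := by
    apply Finset.eq_empty_of_forall_notMem
    intro e he
    have h1 : e ⊆ H.verts := H.edge_sub e he
    have h2 : e.card = k := hH e he
    rw [h] at h1
    have : e = ∅ := Finset.subset_empty.1 h1
    rw [this] at h2; simp at h2; omega
  have hmset : H.mset = {∅} := by
    rw [mset, hedges]
    simp only [Finset.powerset_empty]
    rw [Finset.filter_singleton, if_pos (isMatching_empty H)]
  rw [mu, hmset, h]
  simp

lemma pos_of_mul_pow_pos {x a : ℝ} {m : ℕ} (hx : 0 < x) (h : 0 < x ^ m * a) : 0 < a := by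
  by_contra hle
  push_neg at hle
  have : x ^ m * a ≤ 0 := mul_nonpos_of_nonneg_of_nonpos (le_of_lt (pow_pos hx m)) hle
  linarith

lemma main_ind {k Δ : ℕ} (hk : 2 ≤ k) (hΔ2 : 2 ≤ Δ) {x β : ℝ} (hβ : 1 < β) (hx0 : 0 < x)
    (h1 : (Δ : ℝ) * β ^ (k - 1) ≤ x ^ k)
    (h2 : ((Δ : ℝ) - 1) * β ^ k ≤ (β - 1) * x ^ k) :
    ∀ n : ℕ, ∀ H : Hypergraph' α, H.verts.card ≤ n → H.IsUniform k →
      (∀ u, H.degree u ≤ Δ) →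
      0 < H.mu k x ∧
      ∀ v ∈ H.verts, H.degree v ≤ Δ - 1 →
        x * (H.delete {v}).mu k x < β * H.mu k x := by
  have hβ0 : (0 : ℝ) < β := lt_trans one_pos hβ
  have hk1 : k - 1 + 1 = k := by omega
  intro n
  induction n with
  | zero =>
    intro H hcard hun hdeg
    have hV : H.verts = ∅ := Finset.card_eq_zero.1 (Nat.le_zero.1 hcard)
    constructor
    · rw [mu_of_verts_empty (by omega) hun hV]; norm_num
    · intro v hv
      rw [hV] at hv; simp at hv
  | succ n IH =>
    intro H hcard hun hdeg
    by_cases hV : H.verts = ∅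
    · constructor
      · rw [mu_of_verts_empty (by omega) hun hV]; norm_num
      · intro v hv
        rw [hV] at hv; simp at hv
    -- chain lemma
    have chain : ∀ (j : ℕ) (e : Finset α), e ∈ H.edges → ∀ W ⊆ e, W.Nonempty →
        (e \ W).card = j →
        x ^ j * (H.delete e).mu k x ≤ β ^ j * (H.delete W).mu k x ∧
        (1 ≤ j → x ^ j * (H.delete e).mu k x < β ^ j * (H.delete W).mu k x) := by
      intro j
      induction j with
      | zero =>
        intro e he W hWe hWne hc0
        have : e \ W = ∅ := Finset.card_eq_zero.1 hc0
        have heW : e ⊆ W := by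
          intro a ha
          by_contra haW
          have hmem : a ∈ e \ W := Finset.mem_sdiff.2 ⟨ha, haW⟩
          rw [this] at hmem
          simp at hmem
        have : W = e := Finset.Subset.antisymm hWe heW
        subst this
        exact ⟨by simp, by omega⟩
      | succ j IHj =>
        intro e he W hWe hWne hcj
        obtain ⟨u, hu⟩ : (e \ W).Nonempty := Finset.card_pos.1 (by omega)
        have huE : u ∈ e := (Finset.mem_sdiff.1 hu).1
        have huW : u ∉ W := (Finset.mem_sdiff.1 hu).2
        have hW'e : insert u W ⊆ e := Finset.insert_subset huE hWe
        have hcard' : (e \ insert u W).card = j := by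
          rw [Finset.sdiff_insert, Finset.card_erase_of_mem hu, hcj]
          omega
        have hstep := IHj e he (insert u W) hW'e ⟨u, Finset.mem_insert_self u W⟩ hcard'
        -- apply outer IH to H.delete W at u
        obtain ⟨w, hw⟩ := hWne
        have hwV : w ∈ H.verts := H.edge_sub e he (hWe hw)
        have hcardW : (H.delete W).verts.card ≤ n := by
          have hsub : (H.delete W).verts ⊆ H.verts.erase w := by
            intro a ha
            rw [delete] at ha
            simp only [Finset.mem_sdiff] at ha
            exact Finset.mem_erase.2 ⟨fun h => ha.2 (h ▸ hw), ha.1⟩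
          have := Finset.card_le_card hsub
          rw [Finset.card_erase_of_mem hwV] at this
          omega
        have hIHW := IH (H.delete W) hcardW (isUniform_delete hun W)
          (fun u' => le_trans (degree_delete_le H W u') (hdeg u'))
        have huVW : u ∈ (H.delete W).verts := by
          rw [delete]
          exact Finset.mem_sdiff.2 ⟨H.edge_sub e he huE, huW⟩
        have hdegu : (H.delete W).degree u ≤ Δ - 1 := by
          have := degree_delete_le_pred he huE
            (Finset.not_disjoint_iff.2 ⟨w, hWe hw, hw⟩)
          have := hdeg u
          omega
        have hratio := hIHW.2 u huVW hdegu
        rw [delete_delete] at hratio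
        have hUW : W ∪ {u} = insert u W := by
          ext a; simp [or_comm]
        rw [hUW] at hratio
        have key : x ^ (j + 1) * (H.delete e).mu k x < β ^ (j + 1) * (H.delete W).mu k x := by
          calc x ^ (j + 1) * (H.delete e).mu k x
              = x * (x ^ j * (H.delete e).mu k x) := by ring
            _ ≤ x * (β ^ j * (H.delete (insert u W)).mu k x) :=
                mul_le_mul_of_nonneg_left hstep.1 (le_of_lt hx0)
            _ = β ^ j * (x * (H.delete (insert u W)).mu k x) := by ring
            _ < β ^ j * (β * (H.delete W).mu k x) :=
                mul_lt_mul_of_pos_left hratio (pow_pos hβ0 j)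
            _ = β ^ (j + 1) * (H.delete W).mu k x := by ring
        exact ⟨le_of_lt key, fun _ => key⟩
    -- main argument
    have hxk : x ^ (k - 1) * x = x ^ k := by
      rw [← pow_succ, hk1]
    have hβk : β ^ (k - 1) * β = β ^ k := by
      rw [← pow_succ, hk1]
    have main_pt : ∀ v ∈ H.verts,
        0 < (H.delete {v}).mu k x ∧
        x ^ (k - 1) * H.mu k x
          = x ^ k * (H.delete {v}).mu k x
            - ∑ e ∈ H.edges.filter (fun e => v ∈ e), x ^ (k - 1) * (H.delete e).mu k x ∧
        (∀ e ∈ H.edges.filter (fun e => v ∈ e),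
          x ^ (k - 1) * (H.delete e).mu k x < β ^ (k - 1) * (H.delete {v}).mu k x) := by
      intro v hv
      have hcardv : (H.delete {v}).verts.card ≤ n := by
        rw [verts_delete_card (Finset.singleton_subset_iff.2 hv)]
        simp only [Finset.card_singleton]
        have : 1 ≤ H.verts.card := Finset.card_pos.2 ⟨v, hv⟩
        omega
      have hIHv := IH (H.delete {v}) hcardv (isUniform_delete hun _)
        (fun u' => le_trans (degree_delete_le H _ u') (hdeg u'))
      refine ⟨hIHv.1, ?_, ?_⟩
      · rw [mu_rec H hk hun x hv, mul_sub, Finset.mul_sum, ← mul_assoc, hxk]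
      · intro e he
        rw [Finset.mem_filter] at he
        have hve : v ∈ e := he.2
        have hek : e.card = k := hun e he.1
        have hc : (e \ {v}).card = k - 1 := by
          rw [Finset.sdiff_singleton_eq_erase, Finset.card_erase_of_mem hve, hek]
        exact (chain (k - 1) e he.1 {v} (Finset.singleton_subset_iff.2 hve)
          ⟨v, Finset.mem_singleton_self v⟩ hc).2 (by omega)
    obtain ⟨v, hv⟩ := Finset.nonempty_iff_ne_empty.2 hV
    -- part (a)
    have parta : 0 < H.mu k x := by
      obtain ⟨hposHv, hrec, hfib⟩ := main_pt v hv
      apply pos_of_mul_pow_pos hx0 (m := k - 1)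
      rw [hrec]
      by_cases hEv : (H.edges.filter (fun e => v ∈ e)).Nonempty
      · have hsum : ∑ e ∈ H.edges.filter (fun e => v ∈ e), x ^ (k - 1) * (H.delete e).mu k x
            < (H.degree v : ℝ) * (β ^ (k - 1) * (H.delete {v}).mu k x) := by
          calc ∑ e ∈ H.edges.filter (fun e => v ∈ e), x ^ (k - 1) * (H.delete e).mu k x
              < ∑ _e ∈ H.edges.filter (fun e => v ∈ e), β ^ (k - 1) * (H.delete {v}).mu k x :=
                Finset.sum_lt_sum_of_nonempty hEv hfib
            _ = (H.degree v : ℝ) * (β ^ (k - 1) * (H.delete {v}).mu k x) := by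
                rw [Finset.sum_const, nsmul_eq_mul]; rfl
        have hdv : (H.degree v : ℝ) ≤ (Δ : ℝ) := Nat.cast_le.2 (hdeg v)
        have hb : (H.degree v : ℝ) * (β ^ (k - 1) * (H.delete {v}).mu k x)
            ≤ x ^ k * (H.delete {v}).mu k x := by
          have hbb : (H.degree v : ℝ) * β ^ (k - 1) ≤ x ^ k :=
            le_trans (mul_le_mul_of_nonneg_right hdv (le_of_lt (pow_pos hβ0 _))) h1
          calc (H.degree v : ℝ) * (β ^ (k - 1) * (H.delete {v}).mu k x)
              = ((H.degree v : ℝ) * β ^ (k - 1)) * (H.delete {v}).mu k x := by ring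
            _ ≤ x ^ k * (H.delete {v}).mu k x :=
                mul_le_mul_of_nonneg_right hbb (le_of_lt hposHv)
        linarith
      · rw [Finset.not_nonempty_iff_eq_empty.1 hEv]
        simp only [Finset.sum_empty, sub_zero]
        exact mul_pos (pow_pos hx0 k) hposHv
    refine ⟨parta, ?_⟩
    -- part (b)
    intro v hvV hdegv
    obtain ⟨hposHv, hrec, hfib⟩ := main_pt v hvV
    have goal' : 0 < x ^ (k - 1) * (β * H.mu k x - x * (H.delete {v}).mu k x) := by
      have expand : x ^ (k - 1) * (β * H.mu k x - x * (H.delete {v}).mu k x)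
          = (β - 1) * x ^ k * (H.delete {v}).mu k x
            - β * ∑ e ∈ H.edges.filter (fun e => v ∈ e), x ^ (k - 1) * (H.delete e).mu k x := by
        have : x ^ (k - 1) * (β * H.mu k x) = β * (x ^ (k - 1) * H.mu k x) := by ring
        rw [mul_sub, this, hrec, ← mul_assoc, hxk]
        ring
      rw [expand]
      by_cases hEv : (H.edges.filter (fun e => v ∈ e)).Nonempty
      · have hsum : ∑ e ∈ H.edges.filter (fun e => v ∈ e), x ^ (k - 1) * (H.delete e).mu k x
            < (H.degree v : ℝ) * (β ^ (k - 1) * (H.delete {v}).mu k x) := by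
          calc ∑ e ∈ H.edges.filter (fun e => v ∈ e), x ^ (k - 1) * (H.delete e).mu k x
              < ∑ _e ∈ H.edges.filter (fun e => v ∈ e), β ^ (k - 1) * (H.delete {v}).mu k x :=
                Finset.sum_lt_sum_of_nonempty hEv hfib
            _ = (H.degree v : ℝ) * (β ^ (k - 1) * (H.delete {v}).mu k x) := by
                rw [Finset.sum_const, nsmul_eq_mul]; rfl
        have hdv : (H.degree v : ℝ) ≤ (Δ : ℝ) - 1 := by
          have h' : H.degree v ≤ Δ - 1 := hdegv
          have : (H.degree v : ℝ) ≤ ((Δ - 1 : ℕ) : ℝ) := Nat.cast_le.2 h'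
          rwa [Nat.cast_sub (by omega), Nat.cast_one] at this
        have hb : β * ((H.degree v : ℝ) * (β ^ (k - 1) * (H.delete {v}).mu k x))
            ≤ (β - 1) * x ^ k * (H.delete {v}).mu k x := by
          have hbb : β * ((H.degree v : ℝ) * β ^ (k - 1)) ≤ (β - 1) * x ^ k := by
            have e1 : β * ((H.degree v : ℝ) * β ^ (k - 1)) = (H.degree v : ℝ) * β ^ k := by
              rw [← hβk]; ring
            rw [e1]
            calc (H.degree v : ℝ) * β ^ k ≤ ((Δ : ℝ) - 1) * β ^ k :=
                  mul_le_mul_of_nonneg_right hdv (le_of_lt (pow_pos hβ0 k))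
              _ ≤ (β - 1) * x ^ k := h2
          calc β * ((H.degree v : ℝ) * (β ^ (k - 1) * (H.delete {v}).mu k x))
              = (β * ((H.degree v : ℝ) * β ^ (k - 1))) * (H.delete {v}).mu k x := by ring
            _ ≤ ((β - 1) * x ^ k) * (H.delete {v}).mu k x :=
                mul_le_mul_of_nonneg_right hbb (le_of_lt hposHv)
            _ = (β - 1) * x ^ k * (H.delete {v}).mu k x := by ring
        have hβsum : β * ∑ e ∈ H.edges.filter (fun e => v ∈ e), x ^ (k - 1) * (H.delete e).mu k x
            < β * ((H.degree v : ℝ) * (β ^ (k - 1) * (H.delete {v}).mu k x)) :=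
          mul_lt_mul_of_pos_left hsum hβ0
        linarith
      · rw [Finset.not_nonempty_iff_eq_empty.1 hEv]
        simp only [Finset.sum_empty, mul_zero, sub_zero]
        have : 0 < β - 1 := by linarith
        positivity
    have := pos_of_mul_pow_pos hx0 goal'
    linarith


end Hypergraph'



/-- For a connected `k`-graph with maximum degree `Δ ≥ 2`, the matching polynomial is
positive for all real `x ≥ (k/(k−1))·((k−1)(Δ−1))^{1/k}`; in particular every real zero
is strictly below this bound. -/
theorem matchingPoly_pos_of_large {α : Type*} [DecidableEq α]
    (H : Hypergraph' α) (k Δ : ℕ) (hk : 2 ≤ k) (hH : H.IsUniform k)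
    (hconn : H.Connected) (hΔ : H.maxDegree Δ) (hΔ2 : 2 ≤ Δ) :
    (∀ x : ℝ, (k : ℝ) / ((k : ℝ) - 1) *
        (((k : ℝ) - 1) * ((Δ : ℝ) - 1)) ^ ((1 : ℝ) / (k : ℝ)) ≤ x →
      0 < (H.matchingPoly k).eval x) ∧
    ∀ x : ℝ, (H.matchingPoly k).eval x = 0 →
      x < (k : ℝ) / ((k : ℝ) - 1) *
        (((k : ℝ) - 1) * ((Δ : ℝ) - 1)) ^ ((1 : ℝ) / (k : ℝ)) := by
  have hkR : (2:ℝ) ≤ (k:ℝ) := by exact_mod_cast hk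
  have hΔR : (2:ℝ) ≤ (Δ:ℝ) := by exact_mod_cast hΔ2
  have hkm1 : (0:ℝ) < (k:ℝ) - 1 := by linarith
  have hk0 : (k:ℝ) ≠ 0 := by linarith
  have hc0 : (0:ℝ) ≤ ((k:ℝ)-1) * ((Δ:ℝ)-1) := by nlinarith
  have hβ1 : 1 < (k:ℝ)/((k:ℝ)-1) := by rw [lt_div_iff₀ hkm1]; linarith
  have hβ0 : (0:ℝ) < (k:ℝ)/((k:ℝ)-1) := by linarith
  have hcp : 0 < (((k:ℝ)-1) * ((Δ:ℝ)-1)) ^ ((1:ℝ)/(k:ℝ)) :=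
    Real.rpow_pos_of_pos (by nlinarith) _
  have ht0 : 0 < (k:ℝ)/((k:ℝ)-1) * ((((k:ℝ)-1) * ((Δ:ℝ)-1)) ^ ((1:ℝ)/(k:ℝ))) :=
    mul_pos hβ0 hcp
  have hpowc : ((((k:ℝ)-1) * ((Δ:ℝ)-1)) ^ ((1:ℝ)/(k:ℝ))) ^ k = ((k:ℝ)-1) * ((Δ:ℝ)-1) := by
    rw [← Real.rpow_natCast ((((k:ℝ)-1) * ((Δ:ℝ)-1)) ^ ((1:ℝ)/(k:ℝ))) k,
      ← Real.rpow_mul hc0, one_div, inv_mul_cancel₀ hk0, Real.rpow_one]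
  have hk1 : k - 1 + 1 = k := by omega
  have hβsplit : ((k:ℝ)/((k:ℝ)-1)) ^ k
      = ((k:ℝ)/((k:ℝ)-1)) ^ (k-1) * ((k:ℝ)/((k:ℝ)-1)) := by
    rw [← pow_succ, hk1]
  have hβmul : ((k:ℝ)/((k:ℝ)-1)) * ((k:ℝ)-1) = (k:ℝ) := div_mul_cancel₀ _ (ne_of_gt hkm1)
  have htk2 : ((k:ℝ)/((k:ℝ)-1) * ((((k:ℝ)-1) * ((Δ:ℝ)-1)) ^ ((1:ℝ)/(k:ℝ)))) ^ k
      = (k:ℝ) * ((Δ:ℝ)-1) * ((k:ℝ)/((k:ℝ)-1)) ^ (k-1) := by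
    rw [mul_pow, hpowc, hβsplit]
    linear_combination (((k:ℝ)/((k:ℝ)-1)) ^ (k-1) * ((Δ:ℝ)-1)) * hβmul
  have hβ2 : (((k:ℝ)/((k:ℝ)-1)) - 1) * (k:ℝ) = (k:ℝ)/((k:ℝ)-1) := by
    field_simp
    ring
  have hkey : ∀ x : ℝ, (k : ℝ) / ((k : ℝ) - 1) *
      (((k : ℝ) - 1) * ((Δ : ℝ) - 1)) ^ ((1 : ℝ) / (k : ℝ)) ≤ x →
      0 < (H.matchingPoly k).eval x := by
    intro x hx
    have hx0 : 0 < x := lt_of_lt_of_le ht0 hx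
    have hxk : ((k:ℝ)/((k:ℝ)-1) * ((((k:ℝ)-1) * ((Δ:ℝ)-1)) ^ ((1:ℝ)/(k:ℝ)))) ^ k
        ≤ x ^ k := pow_le_pow_left₀ (le_of_lt ht0) hx k
    have hBpos : (0:ℝ) < ((k:ℝ)/((k:ℝ)-1)) ^ (k-1) := pow_pos hβ0 _
    have hΔle : (Δ:ℝ) ≤ (k:ℝ)*((Δ:ℝ)-1) := by nlinarith
    have h1 : (Δ:ℝ) * ((k:ℝ)/((k:ℝ)-1)) ^ (k-1) ≤ x ^ k := by
      calc (Δ:ℝ) * ((k:ℝ)/((k:ℝ)-1)) ^ (k-1)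
          ≤ ((k:ℝ)*((Δ:ℝ)-1)) * ((k:ℝ)/((k:ℝ)-1)) ^ (k-1) :=
            mul_le_mul_of_nonneg_right hΔle (le_of_lt hBpos)
        _ = ((k:ℝ)/((k:ℝ)-1) * ((((k:ℝ)-1) * ((Δ:ℝ)-1)) ^ ((1:ℝ)/(k:ℝ)))) ^ k := by
            rw [htk2]
        _ ≤ x ^ k := hxk
    have h2 : ((Δ:ℝ)-1) * ((k:ℝ)/((k:ℝ)-1)) ^ k
        ≤ (((k:ℝ)/((k:ℝ)-1)) - 1) * x ^ k := by
      calc ((Δ:ℝ)-1) * ((k:ℝ)/((k:ℝ)-1)) ^ k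
          = (((k:ℝ)/((k:ℝ)-1)) - 1)
            * (((k:ℝ)/((k:ℝ)-1) * ((((k:ℝ)-1) * ((Δ:ℝ)-1)) ^ ((1:ℝ)/(k:ℝ)))) ^ k) := by
            rw [htk2, hβsplit]
            linear_combination (-(((Δ:ℝ)-1) * ((k:ℝ)/((k:ℝ)-1)) ^ (k-1))) * hβ2
        _ ≤ (((k:ℝ)/((k:ℝ)-1)) - 1) * x ^ k :=
            mul_le_mul_of_nonneg_left hxk (by linarith)
    rw [Hypergraph'.eval_eq_mu]
    exact (Hypergraph'.main_ind hk hΔ2 hβ1 hx0 h1 h2 H.verts.card H le_rfl hH hΔ.1).1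
  refine ⟨hkey, ?_⟩
  intro x hzero
  by_contra hge
  push_neg at hge
  have := hkey x hge
  rw [hzero] at this
  exact lt_irrefl 0 this
end

section
/- Let H be a connected k-uniform hypergraph with maximum degree Δ, let u be a vertex of H with degree d_H(u) < ξ for some integer ξ ≥ max{Δ,2}. Then for every real x ≥ (k/(k−1))·((k−1)(ξ−1))^{1/k}, the ratio μ(H,x)/μ(H−u,x) is strictly greater than ((k−1)(ξ−1))^{1/k}. -/
open scoped Classical

namespace FinHypergraph

variable {α : Type*} [DecidableEq α]

lemma hg_ext (G1 G2 : FinHypergraph α) (h1 : G1.verts = G2.verts) (h2 : G1.edges = G2.edges) :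
    G1 = G2 := by
  cases G1; cases G2; simp_all

/-- The finset of all matchings of `G`. -/
noncomputable def matchings (G : FinHypergraph α) : Finset (Finset (Finset α)) :=
  G.edges.powerset.filter (fun M => G.IsMatching M)

lemma mem_matchings (G : FinHypergraph α) (M : Finset (Finset α)) :
    M ∈ G.matchings ↔ G.IsMatching M := by
  simp only [matchings, Finset.mem_filter, Finset.mem_powerset]
  exact ⟨fun h => h.2, fun h => ⟨h.1, h⟩⟩

lemma mul_card_le {G : FinHypergraph α} {k : ℕ} (hU : G.IsUniform k) {M : Finset (Finset α)}
    (hM : G.IsMatching M) : k * M.card ≤ G.verts.card := by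
  have h1 : (M.biUnion id).card = ∑ e ∈ M, e.card :=
    Finset.card_biUnion (fun e he f hf hne => hM.2 e he f hf hne)
  have h2 : M.biUnion id ⊆ G.verts := by
    intro a ha
    obtain ⟨e, he, hae⟩ := Finset.mem_biUnion.mp ha
    exact G.edge_sub e (hM.1 he) hae
  calc k * M.card = ∑ _e ∈ M, k := by rw [Finset.sum_const, smul_eq_mul, mul_comm]
    _ = ∑ e ∈ M, e.card := Finset.sum_congr rfl fun e he => (hU e (hM.1 he)).symm
    _ = (M.biUnion id).card := h1.symm
    _ ≤ G.verts.card := Finset.card_le_card h2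

lemma eval_eq_sum (G : FinHypergraph α) (k : ℕ) (x : ℝ) :
    (G.matchingPoly k).eval x
      = ∑ M ∈ G.matchings, (-1:ℝ)^M.card * x^(G.verts.card - k * M.card) := by
  rw [matchingPoly, Polynomial.eval_finset_sum]
  simp only [Polynomial.eval_mul, Polynomial.eval_C, Polynomial.eval_pow, Polynomial.eval_X]
  rw [← Finset.sum_fiberwise_of_maps_to (g := Finset.card)
      (t := Finset.range (G.edges.card + 1))
      (fun M hM => by
        rw [Finset.mem_range, Nat.lt_succ_iff]
        exact Finset.card_le_card ((G.mem_matchings M).mp hM).1)]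
  refine Finset.sum_congr rfl fun r _ => ?_
  have hcard : (G.matchings.filter (fun M => M.card = r)).card = G.matchCount r := by
    rw [matchings, Finset.filter_filter, matchCount]
    congr 1
    apply Finset.filter_congr
    intro M _
    constructor
    · rintro ⟨h1, h2⟩; exact ⟨h2, h1⟩
    · rintro ⟨h1, h2⟩; exact ⟨h2, h1⟩
  calc (-1:ℝ)^r * (G.matchCount r : ℝ) * x^(G.verts.card - k * r)
      = (G.matchings.filter (fun M => M.card = r)).card
          • ((-1:ℝ)^r * x^(G.verts.card - k * r)) := by
        rw [hcard, nsmul_eq_mul]; ring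
    _ = ∑ _M ∈ G.matchings.filter (fun M => M.card = r),
          (-1:ℝ)^r * x^(G.verts.card - k * r) := (Finset.sum_const _).symm
    _ = _ := by
        apply Finset.sum_congr rfl
        intro M hM
        have hMr : M.card = r := (Finset.mem_filter.mp hM).2
        rw [hMr]

lemma uniform_delete {G : FinHypergraph α} {k : ℕ} (hU : G.IsUniform k) (W : Finset α) :
    (G.delete W).IsUniform k := by
  intro e he
  exact hU e (Finset.mem_filter.mp he).1

lemma degree_delete_le (G : FinHypergraph α) (W : Finset α) (w : α) :
    (G.delete W).degree w ≤ G.degree w := by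
  apply Finset.card_le_card
  intro e he
  simp only [delete, Finset.mem_filter] at he ⊢
  exact ⟨he.1.1, he.2⟩

lemma degree_delete_lt (G : FinHypergraph α) {W : Finset α} {w : α} {e : Finset α}
    (heE : e ∈ G.edges) (hwe : w ∈ e) (hmeet : ¬ Disjoint e W) :
    (G.delete W).degree w < G.degree w := by
  apply Finset.card_lt_card
  rw [Finset.ssubset_iff_of_subset]
  · refine ⟨e, Finset.mem_filter.mpr ⟨heE, hwe⟩, ?_⟩
    intro hmem
    simp only [delete, Finset.mem_filter] at hmem
    exact hmeet hmem.1.2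
  · intro f hf
    simp only [delete, Finset.mem_filter] at hf ⊢
    exact ⟨hf.1.1, hf.2⟩

lemma delete_delete (G : FinHypergraph α) (W W' : Finset α) :
    (G.delete W).delete W' = G.delete (W ∪ W') := by
  apply hg_ext
  · ext a
    simp only [delete, Finset.mem_sdiff, Finset.mem_union]
    tauto
  · ext e
    simp only [delete, Finset.mem_filter, Finset.disjoint_union_right]
    tauto

lemma verts_delete (G : FinHypergraph α) (W : Finset α) :
    (G.delete W).verts = G.verts \ W := rfl

lemma card_verts_delete (G : FinHypergraph α) {W : Finset α} (hW : W ⊆ G.verts) :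
    (G.delete W).verts.card = G.verts.card - W.card := by
  rw [verts_delete, Finset.card_sdiff_of_subset hW]

lemma eval_verts_empty (G : FinHypergraph α) {k : ℕ} (hk : 1 ≤ k) (hU : G.IsUniform k)
    (hV : G.verts = ∅) (x : ℝ) : (G.matchingPoly k).eval x = 1 := by
  have hE : G.edges = ∅ := by
    rw [Finset.eq_empty_iff_forall_notMem]
    intro e he
    have h1 : e ⊆ (∅ : Finset α) := hV ▸ G.edge_sub e he
    have h2 : e = ∅ := Finset.subset_empty.mp h1
    have := hU e he
    rw [h2] at this
    simp at this
    omega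
  have hmatch : G.matchings = {∅} := by
    rw [matchings, hE]
    simp only [Finset.powerset_empty]
    rw [Finset.filter_singleton]
    rw [if_pos]
    exact ⟨Finset.empty_subset _, fun e he => absurd he (Finset.notMem_empty e)⟩
  rw [eval_eq_sum, hmatch]
  simp [hV]

/-- The fundamental recurrence: `μ(G) = x·μ(G−v) − Σ_{e∋v} μ(G−e)`. -/
lemma rec_eval (G : FinHypergraph α) {k : ℕ} (hU : G.IsUniform k) (hk : 1 ≤ k)
    {v : α} (hv : v ∈ G.verts) (x : ℝ) :
    (G.matchingPoly k).eval x
      = x * ((G.delete {v}).matchingPoly k).eval x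
        - ∑ e ∈ G.edges.filter (fun e => v ∈ e), ((G.delete e).matchingPoly k).eval x := by
  have hV1 : 1 ≤ G.verts.card := Finset.card_pos.mpr ⟨v, hv⟩
  have hVv : (G.delete {v}).verts.card = G.verts.card - 1 := by
    rw [card_verts_delete G (Finset.singleton_subset_iff.mpr hv), Finset.card_singleton]
  -- Split the matchings of G by whether they cover v.
  have hsplit := Finset.sum_filter_add_sum_filter_not G.matchings
    (fun M => ∀ e ∈ M, v ∉ e)
    (fun M => (-1:ℝ)^M.card * x^(G.verts.card - k * M.card))
  -- Part 1: matchings avoiding v are matchings of G − v.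
  have hS1 : G.matchings.filter (fun M => ∀ e ∈ M, v ∉ e) = (G.delete {v}).matchings := by
    ext M
    simp only [Finset.mem_filter, mem_matchings, IsMatching]
    constructor
    · rintro ⟨⟨hsub, hdisj⟩, havoid⟩
      refine ⟨?_, hdisj⟩
      intro e he
      simp only [delete, Finset.mem_filter, Finset.disjoint_singleton_right]
      exact ⟨hsub he, havoid e he⟩
    · rintro ⟨hsub, hdisj⟩
      have hsub' : ∀ e ∈ M, e ∈ G.edges ∧ v ∉ e := by
        intro e he
        have := hsub he
        simp only [delete, Finset.mem_filter, Finset.disjoint_singleton_right] at this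
        exact this
      exact ⟨⟨fun e he => (hsub' e he).1, hdisj⟩, fun e he => (hsub' e he).2⟩
  have h1 : ∑ M ∈ (G.delete {v}).matchings, (-1:ℝ)^M.card * x^(G.verts.card - k * M.card)
      = x * ((G.delete {v}).matchingPoly k).eval x := by
    rw [eval_eq_sum, Finset.mul_sum]
    refine Finset.sum_congr rfl fun M hM => ?_
    have hle : k * M.card ≤ (G.delete {v}).verts.card :=
      mul_card_le (uniform_delete hU {v}) (((G.delete {v}).mem_matchings M).mp hM)
    have hexp : G.verts.card - k * M.card = ((G.delete {v}).verts.card - k * M.card) + 1 := by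
      omega
    rw [hexp, pow_succ]
    ring
  -- Part 2: matchings covering v, grouped by the edge containing v.
  have hS2 : G.matchings.filter (fun M => ¬ ∀ e ∈ M, v ∉ e)
      = (G.edges.filter (fun e => v ∈ e)).biUnion
          (fun e => G.matchings.filter (fun M => e ∈ M)) := by
    ext M
    simp only [Finset.mem_filter, Finset.mem_biUnion, not_forall, not_not, exists_prop]
    constructor
    · rintro ⟨hM, e, he, hve⟩
      exact ⟨e, ⟨((G.mem_matchings M).mp hM).1 he, hve⟩, hM, he⟩
    · rintro ⟨e, ⟨_, hve⟩, hM, heM⟩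
      exact ⟨hM, e, heM, hve⟩
  have hdisjfib : ((G.edges.filter (fun e => v ∈ e)) : Set (Finset α)).PairwiseDisjoint
      (fun e => G.matchings.filter (fun M => e ∈ M)) := by
    intro e he f hf hef
    simp only [Finset.coe_filter, Set.mem_setOf_eq] at he hf
    rw [Function.onFun, Finset.disjoint_left]
    intro M hMe hMf
    have hmat := ((G.mem_matchings M).mp (Finset.mem_filter.mp hMe).1)
    have hd := hmat.2 e (Finset.mem_filter.mp hMe).2 f (Finset.mem_filter.mp hMf).2 hef
    exact (Finset.disjoint_left.mp hd he.2) hf.2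
  have hedge : ∀ e ∈ G.edges.filter (fun e => v ∈ e),
      ∑ M ∈ G.matchings.filter (fun M => e ∈ M),
        (-1:ℝ)^M.card * x^(G.verts.card - k * M.card)
      = - ((G.delete e).matchingPoly k).eval x := by
    intro e he
    obtain ⟨heE, hve⟩ := Finset.mem_filter.mp he
    have heV : e ⊆ G.verts := G.edge_sub e heE
    have hek : e.card = k := hU e heE
    have hVe : (G.delete e).verts.card = G.verts.card - k := by
      rw [card_verts_delete G heV, hek]
    have hene : e.Nonempty := Finset.card_pos.mp (by omega)
    have henotin : ∀ M' ∈ (G.delete e).matchings, e ∉ M' := by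
      intro M' hM' hcontra
      have := ((G.delete e).mem_matchings M').mp hM'
      have hmem := this.1 hcontra
      simp only [delete, Finset.mem_filter] at hmem
      have : e = ∅ := by simpa using disjoint_self.mp hmem.2
      rw [this] at hene
      exact (Finset.not_nonempty_empty hene)
    rw [eval_eq_sum, ← Finset.sum_neg_distrib]
    apply Finset.sum_nbij' (i := fun M => M.erase e) (j := fun M => insert e M)
    · -- maps to
      intro M hM
      obtain ⟨hMm, heM⟩ := Finset.mem_filter.mp hM
      have hmat := (G.mem_matchings M).mp hMm
      rw [mem_matchings]
      constructor
      · intro f hf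
        obtain ⟨hfe, hfM⟩ := Finset.mem_erase.mp hf
        simp only [delete, Finset.mem_filter]
        exact ⟨hmat.1 hfM, hmat.2 f hfM e heM hfe⟩
      · intro a ha b hb hab
        exact hmat.2 a (Finset.mem_of_mem_erase ha) b (Finset.mem_of_mem_erase hb) hab
    · -- maps back
      intro M' hM'
      have hmat := ((G.delete e).mem_matchings M').mp hM'
      rw [Finset.mem_filter, mem_matchings]
      refine ⟨⟨?_, ?_⟩, Finset.mem_insert_self e M'⟩
      · intro f hf
        rcases Finset.mem_insert.mp hf with rfl | hfM'
        · exact heE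
        · exact (Finset.mem_filter.mp (hmat.1 hfM')).1
      · intro a ha b hb hab
        have hdisj' : ∀ f ∈ M', Disjoint f e := by
          intro f hf
          exact (Finset.mem_filter.mp (hmat.1 hf)).2
        rcases Finset.mem_insert.mp ha with rfl | haM'
        · rcases Finset.mem_insert.mp hb with rfl | hbM'
          · exact absurd rfl hab
          · exact (hdisj' b hbM').symm
        · rcases Finset.mem_insert.mp hb with rfl | hbM'
          · exact hdisj' a haM'
          · exact hmat.2 a haM' b hbM' hab
    · -- left inverse
      intro M hM
      exact Finset.insert_erase (Finset.mem_filter.mp hM).2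
    · -- right inverse
      intro M' hM'
      exact Finset.erase_insert (henotin M' hM')
    · -- function values
      intro M hM
      obtain ⟨hMm, heM⟩ := Finset.mem_filter.mp hM
      have hmat := (G.mem_matchings M).mp hMm
      have hkM : k * M.card ≤ G.verts.card := mul_card_le hU hmat
      have hcM : (M.erase e).card + 1 = M.card := Finset.card_erase_add_one heM
      have hM1 : 1 ≤ M.card := Finset.card_pos.mpr ⟨e, heM⟩
      have hsign : (-1:ℝ)^M.card = -(-1:ℝ)^(M.erase e).card := by
        rw [← hcM, pow_succ]
        ring
      have hkM' : k * M.card = k * (M.erase e).card + k := by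
        rw [← hcM]; ring
      have hexp : G.verts.card - k * M.card
          = (G.delete e).verts.card - k * (M.erase e).card := by
        omega
      rw [hsign, hexp]
      ring
  -- Combine everything.
  rw [eval_eq_sum, ← hsplit, hS1, hS2, Finset.sum_biUnion hdisjfib, h1,
    Finset.sum_congr rfl hedge, Finset.sum_neg_distrib]
  ring

/-- The main inductive lemma: positivity of `μ(G,x)` and the ratio bound. -/
lemma main_ind {k ξ : ℕ} (hk : 2 ≤ k) (hξ : 2 ≤ ξ) {t x : ℝ} (ht : 0 < t)
    (htk : t ^ k = ((k:ℝ) - 1) * ((ξ:ℝ) - 1)) (hx : t + t / ((k:ℝ) - 1) ≤ x) :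
    ∀ N (G : FinHypergraph α), G.verts.card ≤ N → G.IsUniform k → (∀ w, G.degree w ≤ ξ) →
      0 < (G.matchingPoly k).eval x ∧
      ∀ v ∈ G.verts, G.degree v < ξ →
        t * ((G.delete {v}).matchingPoly k).eval x < (G.matchingPoly k).eval x := by
  have hk1 : (1:ℝ) ≤ (k:ℝ) - 1 := by
    have : (2:ℝ) ≤ (k:ℝ) := by exact_mod_cast hk
    linarith
  have hξ1 : (1:ℝ) ≤ (ξ:ℝ) - 1 := by
    have : (2:ℝ) ≤ (ξ:ℝ) := by exact_mod_cast hξ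
    linarith
  have hA1 : (1:ℝ) ≤ t ^ k := by rw [htk]; nlinarith
  have hs : (0:ℝ) < t ^ (k-1) := pow_pos ht _
  have hts : t * t ^ (k-1) = t ^ k := by
    rw [← pow_succ']
    congr 1
    omega
  have htpos : 0 < t + t / ((k:ℝ) - 1) := by positivity
  have hxpos : 0 < x := lt_of_lt_of_le htpos hx
  have htltx : t < x := by
    have : 0 < t / ((k:ℝ) - 1) := by positivity
    linarith
  have hdiv : t / ((k:ℝ)-1) * t ^ (k-1) = (ξ:ℝ) - 1 := by
    have hk0 : (k:ℝ) - 1 ≠ 0 := by linarith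
    field_simp
    rw [hts, htk]
  have hxs : ((ξ:ℝ) - 1) + t * t ^ (k-1) ≤ x * t ^ (k-1) := by
    have hmul := mul_le_mul_of_nonneg_right hx hs.le
    nlinarith [hmul, hdiv]
  have hxsξ : (ξ:ℝ) ≤ x * t ^ (k-1) := by
    have := hts ▸ hA1
    linarith
  intro N
  induction N with
  | zero =>
    intro G hcard hU hdeg
    have hV : G.verts = ∅ := Finset.card_eq_zero.mp (Nat.le_zero.mp hcard)
    constructor
    · rw [eval_verts_empty G (by omega) hU hV]
      norm_num
    · intro v hv
      rw [hV] at hv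
      exact absurd hv (Finset.notMem_empty v)
  | succ N IH =>
    intro G hcard hU hdeg
    -- The chain lemma: for an edge `e` and nonempty `S ⊊ e`,
    -- `μ(G−e)·t^{|e∖S|} < μ(G−S)`.
    have hchain : ∀ n : ℕ, ∀ e ∈ G.edges, ∀ S : Finset α, S ⊆ e → S.Nonempty →
        (e \ S).card = n → 1 ≤ n →
        ((G.delete e).matchingPoly k).eval x * t ^ n
          < ((G.delete S).matchingPoly k).eval x := by
      intro n
      induction n with
      | zero => omega
      | succ m IHn =>
        intro e heE S hSe hSne hcardn _
        have heV : e ⊆ G.verts := G.edge_sub e heE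
        obtain ⟨w, hw⟩ : (e \ S).Nonempty := Finset.card_pos.mp (by omega)
        obtain ⟨hwe, hwS⟩ := Finset.mem_sdiff.mp hw
        have hSV : S ⊆ G.verts := hSe.trans heV
        have hScard : (G.delete S).verts.card ≤ N := by
          have h1 : 1 ≤ S.card := Finset.card_pos.mpr hSne
          have h2 : (G.delete S).verts.card = G.verts.card - S.card :=
            card_verts_delete G hSV
          omega
        have hUS : (G.delete S).IsUniform k := uniform_delete hU S
        have hdegS : ∀ a, (G.delete S).degree a ≤ ξ :=
          fun a => le_trans (degree_delete_le G S a) (hdeg a)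
        have hIHG := IH (G.delete S) hScard hUS hdegS
        have hwS' : w ∈ (G.delete S).verts := by
          rw [verts_delete, Finset.mem_sdiff]
          exact ⟨heV hwe, hwS⟩
        have hmeet : ¬ Disjoint e S := by
          obtain ⟨u0, hu0⟩ := hSne
          exact fun hd => (Finset.disjoint_right.mp hd hu0) (hSe hu0)
        have hdegw : (G.delete S).degree w < ξ :=
          lt_of_lt_of_le (degree_delete_lt G heE hwe hmeet) (hdeg w)
        have hb := hIHG.2 w hwS' hdegw
        rw [delete_delete] at hb
        have hins : S ∪ {w} = insert w S := by
          rw [Finset.union_comm, ← Finset.insert_eq]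
        rw [hins] at hb
        have hsub' : insert w S ⊆ e := Finset.insert_subset hwe hSe
        have hcard' : (e \ insert w S).card = m := by
          rw [Finset.sdiff_insert, Finset.card_erase_of_mem hw]
          omega
        by_cases hm : m = 0
        · -- n = 1 : insert w S = e
          have hee : insert w S = e := by
            apply Finset.eq_of_subset_of_card_le hsub'
            have h1 : (e \ insert w S).card = 0 := by omega
            have h2 : e \ insert w S = ∅ := Finset.card_eq_zero.mp h1
            have h3 : e ⊆ insert w S := by
              intro a ha
              by_contra hna
              have : a ∈ e \ insert w S := Finset.mem_sdiff.mpr ⟨ha, hna⟩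
              rw [h2] at this
              exact absurd this (Finset.notMem_empty a)
            exact Finset.card_le_card h3
          rw [hee] at hb
          subst hm
          rw [pow_one, mul_comm]
          exact hb
        · have hIHm := IHn e heE (insert w S) hsub' ⟨w, Finset.mem_insert_self w S⟩
            hcard' (by omega)
          calc ((G.delete e).matchingPoly k).eval x * t ^ (m+1)
              = (((G.delete e).matchingPoly k).eval x * t ^ m) * t := by
                rw [pow_succ]; ring
            _ < ((G.delete (insert w S)).matchingPoly k).eval x * t :=
                mul_lt_mul_of_pos_right hIHm ht
            _ = t * ((G.delete (insert w S)).matchingPoly k).eval x := mul_comm _ _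
            _ < ((G.delete S).matchingPoly k).eval x := hb
    -- Now the inequalities at a vertex v.
    have key : ∀ v ∈ G.verts,
        0 < (G.matchingPoly k).eval x ∧
        (G.degree v < ξ →
          t * ((G.delete {v}).matchingPoly k).eval x < (G.matchingPoly k).eval x) := by
      intro v hv
      have hvV : {v} ⊆ G.verts := Finset.singleton_subset_iff.mpr hv
      have hVv : (G.delete {v}).verts.card ≤ N := by
        have := card_verts_delete G hvV
        rw [Finset.card_singleton] at this
        have h1 : 1 ≤ G.verts.card := Finset.card_pos.mpr ⟨v, hv⟩
        omega
      have hposv : 0 < ((G.delete {v}).matchingPoly k).eval x :=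
        (IH (G.delete {v}) hVv (uniform_delete hU {v})
          (fun a => le_trans (degree_delete_le G {v} a) (hdeg a))).1
      have hrec := rec_eval G hU (by omega) hv x
      have hterm : ∀ e ∈ G.edges.filter (fun e => v ∈ e),
          ((G.delete e).matchingPoly k).eval x * t ^ (k-1)
            < ((G.delete {v}).matchingPoly k).eval x := by
        intro e he
        obtain ⟨heE, hve⟩ := Finset.mem_filter.mp he
        have hek : e.card = k := hU e heE
        have hcardev : (e \ {v}).card = k - 1 := by
          rw [Finset.sdiff_singleton_eq_erase, Finset.card_erase_of_mem hve, hek]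
        exact hchain (k-1) e heE {v} (Finset.singleton_subset_iff.mpr hve)
          (Finset.singleton_nonempty v) hcardev (by omega)
      set d := G.degree v with hd
      have hdξ : (d:ℝ) ≤ (ξ:ℝ) := by exact_mod_cast hdeg v
      by_cases hd0 : d = 0
      · -- no edges at v
        have hEv : G.edges.filter (fun e => v ∈ e) = ∅ := by
          apply Finset.card_eq_zero.mp
          exact hd0 ▸ rfl
        rw [hEv, Finset.sum_empty, sub_zero] at hrec
        constructor
        · rw [hrec]
          exact mul_pos hxpos hposv
        · intro _
          rw [hrec]
          exact mul_lt_mul_of_pos_right htltx hposv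
      · -- at least one edge at v
        have hEvne : (G.edges.filter (fun e => v ∈ e)).Nonempty := by
          rw [← Finset.card_pos]
          have : G.degree v = (G.edges.filter (fun e => v ∈ e)).card := rfl
          omega
        have hsumlt : ∑ e ∈ G.edges.filter (fun e => v ∈ e),
            ((G.delete e).matchingPoly k).eval x * t ^ (k-1)
            < (d:ℝ) * ((G.delete {v}).matchingPoly k).eval x := by
          calc ∑ e ∈ G.edges.filter (fun e => v ∈ e),
                ((G.delete e).matchingPoly k).eval x * t ^ (k-1)
              < ∑ _e ∈ G.edges.filter (fun e => v ∈ e),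
                  ((G.delete {v}).matchingPoly k).eval x :=
                Finset.sum_lt_sum_of_nonempty hEvne hterm
            _ = (d:ℝ) * ((G.delete {v}).matchingPoly k).eval x := by
                rw [Finset.sum_const, nsmul_eq_mul]
                rfl
        have hrecs : (G.matchingPoly k).eval x * t ^ (k-1)
            = x * ((G.delete {v}).matchingPoly k).eval x * t ^ (k-1)
              - ∑ e ∈ G.edges.filter (fun e => v ∈ e),
                  ((G.delete e).matchingPoly k).eval x * t ^ (k-1) := by
          rw [hrec, ← Finset.sum_mul]
          ring
        have hmainlt : ((G.delete {v}).matchingPoly k).eval x * (x * t^(k-1) - (d:ℝ))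
            < (G.matchingPoly k).eval x * t ^ (k-1) := by
          rw [hrecs]
          nlinarith [hsumlt]
        constructor
        · -- positivity
          have h1 : 0 ≤ x * t^(k-1) - (d:ℝ) := by linarith
          have h2 : 0 ≤ ((G.delete {v}).matchingPoly k).eval x * (x * t^(k-1) - (d:ℝ)) :=
            mul_nonneg hposv.le h1
          nlinarith
        · intro hdlt
          have hdξ1 : (d:ℝ) ≤ (ξ:ℝ) - 1 := by
            have : (d:ℝ) + 1 ≤ (ξ:ℝ) := by exact_mod_cast hdlt
            linarith
          have h1 : t * t^(k-1) ≤ x * t^(k-1) - (d:ℝ) := by linarith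
          have h2 : (t * ((G.delete {v}).matchingPoly k).eval x) * t^(k-1)
              < (G.matchingPoly k).eval x * t ^ (k-1) := by
            calc (t * ((G.delete {v}).matchingPoly k).eval x) * t^(k-1)
                = ((G.delete {v}).matchingPoly k).eval x * (t * t^(k-1)) := by ring
              _ ≤ ((G.delete {v}).matchingPoly k).eval x * (x * t^(k-1) - (d:ℝ)) :=
                  mul_le_mul_of_nonneg_left h1 hposv.le
              _ < (G.matchingPoly k).eval x * t ^ (k-1) := hmainlt
          exact lt_of_mul_lt_mul_right (by linarith [h2]) hs.le
    rcases Finset.eq_empty_or_nonempty G.verts with hV | ⟨v, hv⟩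
    · constructor
      · rw [eval_verts_empty G (by omega) hU hV]
        norm_num
      · intro v hv
        rw [hV] at hv
        exact absurd hv (Finset.notMem_empty v)
    · exact ⟨(key v hv).1, fun w hw hwd => (key w hw).2 hwd⟩

end FinHypergraph


/-- For a connected `k`-graph `H` with maximum degree `Δ`, a vertex `u` of degree
`< ξ` where `ξ ≥ max{Δ,2}`, and all real `x ≥ (k/(k−1))·((k−1)(ξ−1))^{1/k}`, the ratio
`μ(H,x)/μ(H−u,x)` strictly exceeds `((k−1)(ξ−1))^{1/k}`. -/
theorem matchingPoly_ratio_gt {α : Type*} [DecidableEq α]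
    (H : FinHypergraph α) (k Δ ξ : ℕ) (hk : 2 ≤ k) (hH : H.IsUniform k)
    (hconn : H.Connected) (hΔ : H.maxDegree Δ)
    (hξ : max Δ 2 ≤ ξ) (u : α) (hu : u ∈ H.verts) (hdeg : H.degree u < ξ) :
    ∀ x : ℝ, (k : ℝ) / ((k : ℝ) - 1) *
        (((k : ℝ) - 1) * ((ξ : ℝ) - 1)) ^ ((1 : ℝ) / (k : ℝ)) ≤ x →
      (((k : ℝ) - 1) * ((ξ : ℝ) - 1)) ^ ((1 : ℝ) / (k : ℝ)) <
        (H.matchingPoly k).eval x / ((H.delete {u}).matchingPoly k).eval x := by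
  intro x hx
  have hξ2 : 2 ≤ ξ := le_trans (le_max_right _ _) hξ
  have hΔξ : Δ ≤ ξ := le_trans (le_max_left _ _) hξ
  have hk1 : (1:ℝ) ≤ (k:ℝ) - 1 := by
    have : (2:ℝ) ≤ (k:ℝ) := by exact_mod_cast hk
    linarith
  have hξ1 : (1:ℝ) ≤ (ξ:ℝ) - 1 := by
    have : (2:ℝ) ≤ (ξ:ℝ) := by exact_mod_cast hξ2
    linarith
  set t := (((k:ℝ) - 1) * ((ξ:ℝ) - 1)) ^ ((1:ℝ)/(k:ℝ)) with htdef
  have hbase : (0:ℝ) < ((k:ℝ) - 1) * ((ξ:ℝ) - 1) := by nlinarith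
  have ht : 0 < t := Real.rpow_pos_of_pos hbase _
  have hk0 : (k:ℝ) ≠ 0 := by
    have : (2:ℝ) ≤ (k:ℝ) := by exact_mod_cast hk
    linarith
  have htk : t ^ k = ((k:ℝ) - 1) * ((ξ:ℝ) - 1) := by
    rw [htdef, ← Real.rpow_natCast (((((k:ℝ) - 1) * ((ξ:ℝ) - 1)) ^ ((1:ℝ)/(k:ℝ)))) k,
      ← Real.rpow_mul hbase.le, one_div, inv_mul_cancel₀ hk0, Real.rpow_one]
  have hxge : t + t / ((k:ℝ) - 1) ≤ x := by
    have heq : (k:ℝ) / ((k:ℝ) - 1) * t = t + t / ((k:ℝ) - 1) := by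
      have hk10 : (k:ℝ) - 1 ≠ 0 := by linarith
      field_simp
      ring
    rw [← heq]
    exact hx
  have hdegs : ∀ w, H.degree w ≤ ξ := fun w => le_trans (hΔ.1 w) hΔξ
  have hmain := FinHypergraph.main_ind hk hξ2 ht htk hxge H.verts.card H le_rfl hH hdegs
  have hposu : 0 < ((H.delete {u}).matchingPoly k).eval x :=
    (FinHypergraph.main_ind hk hξ2 ht htk hxge (H.delete {u}).verts.card (H.delete {u}) le_rfl
      (FinHypergraph.uniform_delete hH {u})
      (fun w => le_trans (FinHypergraph.degree_delete_le H {u} w) (hdegs w))).1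
  have hb := hmain.2 u hu hdeg
  rw [lt_div_iff₀ hposu]
  linarith [hb]
end
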